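/- arXiv:hep-th/0302120 — 5 statements merged into one kernel-verified Lean document; each statement's English description precedes it below -/
import Mathlib

section
/- Set A(a,b) = (1 − a²)(1 − b²). For c ∈ [−1, 1], the function (a,b) ↦ A(a,b) / ((1 − c·A(a,b))² · √((2 − a²)(2 − b²))) is Lebesgue integrable on (0,1)² if and only if c < 1. In particular the integral converges for c = cos θ with θ ∈ (0, 2π) and diverges at θ = 0. -/
open Real MeasureTheory

private lemma conv_aux (c : ℝ) (hc1 : c < 1) :
    IntegrableOn
      (fun p : ℝ × ℝ =>
        (1 - p.1^2) * (1 - p.2^2) /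
          ((1 - c * ((1 - p.1^2) * (1 - p.2^2)))^2 *
            Real.sqrt ((2 - p.1^2) * (2 - p.2^2))))
      ((Set.Ioo (0:ℝ) 1) ×ˢ (Set.Ioo (0:ℝ) 1)) := by
  have hd : 0 < min 1 (1 - c) := lt_min one_pos (by linarith)
  apply Measure.integrableOn_of_bounded (M := 1 / (min 1 (1 - c))^2)
  case s_finite =>
    rw [Measure.volume_eq_prod, Measure.prod_prod]
    simp [Real.volume_Ioo]
  case f_mble => exact (by fun_prop : Measurable _).aestronglyMeasurable
  case f_bdd =>
    filter_upwards [ae_restrict_mem ((measurableSet_Ioo.prod measurableSet_Ioo))] with p hp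
    obtain ⟨⟨ha0, ha1⟩, hb0, hb1⟩ := hp
    set a := p.1 with hadef
    set b := p.2 with hbdef
    have ha2 : a^2 < 1 := by nlinarith
    have hb2 : b^2 < 1 := by nlinarith
    have hA1 : (1 - a^2) * (1 - b^2) ≤ 1 := by nlinarith
    have hA0 : 0 < (1 - a^2) * (1 - b^2) := by nlinarith
    have hden1 : min 1 (1 - c) ≤ 1 - c * ((1 - a^2) * (1 - b^2)) := by
      rcases le_or_gt c 0 with h | h
      · have : c * ((1 - a^2) * (1 - b^2)) ≤ 0 := mul_nonpos_of_nonpos_of_nonneg h hA0.le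
        calc min 1 (1-c) ≤ 1 := min_le_left _ _
          _ ≤ _ := by linarith
      · have : c * ((1 - a^2) * (1 - b^2)) ≤ c := by nlinarith
        calc min 1 (1-c) ≤ 1 - c := min_le_right _ _
          _ ≤ _ := by linarith
    have hsq : 1 ≤ Real.sqrt ((2 - a^2) * (2 - b^2)) := by
      rw [show (1:ℝ) = Real.sqrt 1 from (Real.sqrt_one).symm]
      exact Real.sqrt_le_sqrt (by nlinarith)
    have hden : (min 1 (1 - c))^2 ≤ (1 - c * ((1 - a^2) * (1 - b^2)))^2 *
        Real.sqrt ((2 - a^2) * (2 - b^2)) := by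
      calc (min 1 (1-c))^2 = (min 1 (1-c))^2 * 1 := by ring
        _ ≤ _ := mul_le_mul (pow_le_pow_left₀ hd.le hden1 2) hsq zero_le_one (by positivity)
    have hdenpos : 0 < (1 - c * ((1 - a^2) * (1 - b^2)))^2 *
        Real.sqrt ((2 - a^2) * (2 - b^2)) := lt_of_lt_of_le (by positivity) hden
    rw [Real.norm_eq_abs, abs_of_nonneg (div_nonneg hA0.le hdenpos.le)]
    exact div_le_div₀ zero_le_one hA1 (by positivity) hden

private lemma div_aux :
    ¬ IntegrableOn
      (fun p : ℝ × ℝ =>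
        (1 - p.1^2) * (1 - p.2^2) /
          ((1 - 1 * ((1 - p.1^2) * (1 - p.2^2)))^2 *
            Real.sqrt ((2 - p.1^2) * (2 - p.2^2))))
      ((Set.Ioo (0:ℝ) 1) ×ˢ (Set.Ioo (0:ℝ) 1)) := by
  intro hf
  set f : ℝ × ℝ → ℝ := fun p =>
        (1 - p.1^2) * (1 - p.2^2) /
          ((1 - 1 * ((1 - p.1^2) * (1 - p.2^2)))^2 *
            Real.sqrt ((2 - p.1^2) * (2 - p.2^2))) with hfdef
  have hf' : Integrable f
      ((volume.restrict (Set.Ioo (0:ℝ) (1/4))).prod (volume.restrict (Set.Ioo (0:ℝ) (1/2)))) := by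
    rw [Measure.prod_restrict, ← Measure.volume_eq_prod]
    exact hf.mono_set (Set.prod_mono (Set.Ioo_subset_Ioo le_rfl (by norm_num))
      (Set.Ioo_subset_Ioo le_rfl (by norm_num)))
  have hint := hf'.integral_norm_prod_left
  have key : IntegrableOn (fun a : ℝ => a ^ (-3 : ℝ)) (Set.Ioo (0:ℝ) (1/4)) := by
    apply Integrable.mono' (hint.const_mul (128/9))
    · fun_prop
    · filter_upwards [ae_restrict_mem measurableSet_Ioo, hf'.prod_right_ae] with a ha hfib
      obtain ⟨ha0, ha4⟩ := ha
      have h3 : a ^ (-3 : ℝ) = (a^3)⁻¹ := by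
        rw [Real.rpow_neg ha0.le]
        congr 1
        rw [show (3:ℝ) = ((3:ℕ):ℝ) by norm_num, Real.rpow_natCast]
      have hrn : ‖a ^ (-3:ℝ)‖ = (a^3)⁻¹ := by
        rw [h3, Real.norm_eq_abs, abs_of_nonneg (by positivity)]
      rw [hrn]
      -- lower bound for the inner integral
      have hsub : Set.Ioo (0:ℝ) a ⊆ Set.Ioo (0:ℝ) (1/2) :=
        Set.Ioo_subset_Ioo le_rfl (by linarith)
      have hfibn : IntegrableOn (fun b => ‖f (a, b)‖) (Set.Ioo (0:ℝ) (1/2)) := hfib.norm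
      have step1 : ∫ b in Set.Ioo (0:ℝ) a, ‖f (a, b)‖ ≤
          ∫ b in Set.Ioo (0:ℝ) (1/2), ‖f (a, b)‖ := by
        apply setIntegral_mono_set hfibn
        · filter_upwards with b using norm_nonneg _
        · exact HasSubset.Subset.eventuallyLE hsub
      have step2 : ∫ b in Set.Ioo (0:ℝ) a, (9 / (128 * a^4)) ≤
          ∫ b in Set.Ioo (0:ℝ) a, ‖f (a, b)‖ := by
        apply setIntegral_mono_on (integrableOn_const (by simp [Real.volume_Ioo]))
          (hfibn.mono_set hsub) measurableSet_Ioo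
        intro b hb
        obtain ⟨hb0, hba⟩ := hb
        have hb4 : b < 1/4 := lt_trans hba ha4
        have hA : (9:ℝ)/16 ≤ (1 - a^2) * (1 - b^2) := by nlinarith
        have hpos1 : 0 ≤ a^2 * (1 - b^2) :=
          mul_nonneg (sq_nonneg a) (by nlinarith : (0:ℝ) ≤ 1 - b^2)
        have hpos : 0 < 1 - 1 * ((1 - a^2) * (1 - b^2)) := by nlinarith [pow_pos hb0 2]
        have hle2 : 1 - 1 * ((1 - a^2) * (1 - b^2)) ≤ 2 * a^2 := by nlinarith
        have h1A : (1 - 1 * ((1 - a^2) * (1 - b^2)))^2 ≤ 4 * a^4 := by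
          calc (1 - 1 * ((1 - a^2) * (1 - b^2)))^2 ≤ (2 * a^2)^2 :=
                pow_le_pow_left₀ hpos.le hle2 2
            _ = 4 * a^4 := by ring
        have hsq2 : Real.sqrt ((2 - a^2) * (2 - b^2)) ≤ 2 := by
          calc Real.sqrt ((2 - a^2) * (2 - b^2)) ≤ Real.sqrt 4 :=
                Real.sqrt_le_sqrt (by nlinarith)
            _ = 2 := by
                rw [show (4:ℝ) = 2^2 by norm_num, Real.sqrt_sq (by norm_num : (0:ℝ) ≤ 2)]
        have hsqpos : 0 < Real.sqrt ((2 - a^2) * (2 - b^2)) :=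
          Real.sqrt_pos.2 (by nlinarith)
        have hdenA : (1 - 1 * ((1 - a^2) * (1 - b^2)))^2 *
            Real.sqrt ((2 - a^2) * (2 - b^2)) ≤ 8 * a^4 := by
          calc _ ≤ (4 * a^4) * 2 :=
                mul_le_mul h1A hsq2 hsqpos.le (by positivity)
            _ = 8 * a^4 := by ring
        have hdenpos : 0 < (1 - 1 * ((1 - a^2) * (1 - b^2)))^2 *
            Real.sqrt ((2 - a^2) * (2 - b^2)) := by
          exact mul_pos (pow_pos hpos 2) hsqpos
        have : 9 / (128 * a^4) ≤ f (a, b) := by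
          have : (9/16 : ℝ) / (8 * a^4) ≤ (1 - a^2) * (1 - b^2) /
              ((1 - 1 * ((1 - a^2) * (1 - b^2)))^2 *
                Real.sqrt ((2 - a^2) * (2 - b^2))) :=
            div_le_div₀ (by nlinarith) hA hdenpos hdenA
          calc 9 / (128 * a^4) = (9/16 : ℝ) / (8 * a^4) := by ring
            _ ≤ _ := this
        exact this.trans (le_abs_self _)
      have step3 : ∫ b in Set.Ioo (0:ℝ) a, (9 / (128 * a^4)) = (9/128) * (a^3)⁻¹ := by
        rw [setIntegral_const]
        simp [Real.volume_Ioo, ENNReal.toReal_ofReal ha0.le, max_eq_left ha0.le]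
        field_simp
      have hfinal : (9/128) * (a^3)⁻¹ ≤ ∫ b in Set.Ioo (0:ℝ) (1/2), ‖f (a, b)‖ := by
        rw [← step3]; exact step2.trans step1
      linarith
  have := (intervalIntegral.integrableOn_Ioo_rpow_iff (by norm_num : (0:ℝ) < 1/4)).1 key
  linarith

/-- Convergence of the fixed-angle partition function integral of quantum
U(1)-Yang-Mills theory on `ℤ₂ × ℤ₂`: with `A(a,b) = (1−a²)(1−b²)` and
`c ∈ [−1,1]`, the integrand `A/((1−cA)²√((2−a²)(2−b²)))` is Lebesgue integrable
on `(0,1)²` if and only if `c < 1` (convergent for `c = cos θ`, `θ ≠ 0`,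
divergent at `θ = 0`). -/
theorem stmt_3 (c : ℝ) (hc : c ∈ Set.Icc (-1 : ℝ) 1) :
    IntegrableOn
      (fun p : ℝ × ℝ =>
        (1 - p.1^2) * (1 - p.2^2) /
          ((1 - c * ((1 - p.1^2) * (1 - p.2^2)))^2 *
            Real.sqrt ((2 - p.1^2) * (2 - p.2^2))))
      ((Set.Ioo (0:ℝ) 1) ×ˢ (Set.Ioo (0:ℝ) 1))
    ↔ c < 1 := by
  constructor
  · intro h
    by_contra hlt
    have hc1 : c = 1 := le_antisymm hc.2 (not_lt.1 hlt)
    subst hc1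
    exact div_aux h
  · exact conv_aux c
end

section
/- Set A(a,b) = (1 − a²)(1 − b²). Then ∫_{(0,1)²} A(a,b)² / √((2 − a²)(2 − b²)) da db = π²/64, and consequently the ratio ((1/2)·∫_{(0,1)²} A²/√((2−a²)(2−b²)) da db) / (∫_{(0,1)²} A/√((2−a²)(2−b²)) da db) equals π²/32. -/
open Real MeasureTheory

lemma two_sub_sq_pos {x : ℝ} (hx : x ∈ Set.uIcc (0:ℝ) 1) : 0 < 2 - x^2 := by
  rw [Set.uIcc_of_le (by norm_num)] at hx
  nlinarith [hx.1, hx.2]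

lemma sqrt_two_sub_sq_pos {x : ℝ} (hx : x ∈ Set.uIcc (0:ℝ) 1) :
    0 < Real.sqrt (2 - x^2) := Real.sqrt_pos.2 (two_sub_sq_pos hx)

lemma hasDerivAt_sqrt_two_sub_sq {x : ℝ} (hx : x ∈ Set.uIcc (0:ℝ) 1) :
    HasDerivAt (fun y => Real.sqrt (2 - y^2)) (-x / Real.sqrt (2 - x^2)) x := by
  have h1 : HasDerivAt (fun y : ℝ => 2 - y^2) (-(2*x)) x := by
    simpa using ((hasDerivAt_pow 2 x).const_sub 2)
  have h2 := (Real.hasDerivAt_sqrt (ne_of_gt (two_sub_sq_pos hx))).comp x h1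
  refine h2.congr_deriv ?_
  have hs := sqrt_two_sub_sq_pos hx
  field_simp

lemma deriv_F {x : ℝ} (hx : x ∈ Set.uIcc (0:ℝ) 1) :
    HasDerivAt (fun y => (1/2) * (y * Real.sqrt (2 - y^2)))
      ((1 - x^2) / Real.sqrt (2 - x^2)) x := by
  have hs := sqrt_two_sub_sq_pos hx
  have h := ((hasDerivAt_id x).mul (hasDerivAt_sqrt_two_sub_sq hx)).const_mul (1/2 : ℝ)
  refine h.congr_deriv ?_
  have h2 : Real.sqrt (2 - x^2) ^ 2 = 2 - x^2 := Real.sq_sqrt (two_sub_sq_pos hx).le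
  field_simp
  nlinarith [h2, show x * id x = x^2 by simp [sq]]

lemma deriv_G {x : ℝ} (hx : x ∈ Set.uIcc (0:ℝ) 1) :
    HasDerivAt (fun y => (1/2) * Real.arcsin (y / Real.sqrt 2)
        + (1/4) * (y * (1 - y^2) * Real.sqrt (2 - y^2)))
      ((1 - x^2)^2 / Real.sqrt (2 - x^2)) x := by
  have hx' : x ∈ Set.Icc (0:ℝ) 1 := by rwa [Set.uIcc_of_le (by norm_num)] at hx
  have hs := sqrt_two_sub_sq_pos hx
  have h2 : Real.sqrt (2 - x^2) ^ 2 = 2 - x^2 := Real.sq_sqrt (two_sub_sq_pos hx).le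
  have hs2 : (0:ℝ) < Real.sqrt 2 := by positivity
  have h22 : Real.sqrt 2 ^ 2 = 2 := Real.sq_sqrt (by norm_num)
  have hone : (1:ℝ) < Real.sqrt 2 := by
    nlinarith [h22, hs2]
  have hlt : x / Real.sqrt 2 < 1 := by
    rw [div_lt_one hs2]; linarith [hx'.2]
  have hgt : -1 < x / Real.sqrt 2 := by
    have : (0:ℝ) ≤ x / Real.sqrt 2 := div_nonneg hx'.1 hs2.le
    linarith
  have harc : HasDerivAt Real.arcsin (1 / Real.sqrt (1 - (x / Real.sqrt 2)^2)) (x / Real.sqrt 2) :=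
    Real.hasDerivAt_arcsin (ne_of_gt hgt) (ne_of_lt hlt)
  have hinner : HasDerivAt (fun y : ℝ => y / Real.sqrt 2) (1 / Real.sqrt 2) x := by
    simpa using (hasDerivAt_id x).div_const (Real.sqrt 2)
  have h1 : HasDerivAt (fun y => Real.arcsin (y / Real.sqrt 2))
      (1 / Real.sqrt (1 - (x / Real.sqrt 2)^2) * (1 / Real.sqrt 2)) x := by exact harc.comp x hinner
  have key : 1 / Real.sqrt (1 - (x / Real.sqrt 2)^2) * (1 / Real.sqrt 2)
      = 1 / Real.sqrt (2 - x^2) := by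
    have e1 : 1 - (x / Real.sqrt 2)^2 = (2 - x^2) / 2 := by
      rw [div_pow, h22]; ring
    rw [e1, Real.sqrt_div (two_sub_sq_pos hx).le]
    field_simp
  rw [key] at h1
  have hp : HasDerivAt (fun y : ℝ => y * (1 - y^2)) (1 - 3*x^2) x := by
    have := (hasDerivAt_id x).mul ((hasDerivAt_pow 2 x).const_sub 1)
    refine this.congr_deriv ?_
    simp; ring
  have hq := hp.mul (hasDerivAt_sqrt_two_sub_sq hx)
  have h := (h1.const_mul (1/2 : ℝ)).add (hq.const_mul (1/4 : ℝ))
  refine h.congr_deriv ?_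
  have h2' : Real.sqrt (2 - x^2) * Real.sqrt (2 - x^2) = 2 - x^2 :=
    Real.mul_self_sqrt (two_sub_sq_pos hx).le
  field_simp
  linear_combination ((2:ℝ) - 6*x^2) * h2'

lemma contOn1 : ContinuousOn (fun x : ℝ => (1 - x^2) / Real.sqrt (2 - x^2)) (Set.uIcc 0 1) := by
  apply ContinuousOn.div
  · fun_prop
  · fun_prop
  · exact fun x hx => (sqrt_two_sub_sq_pos hx).ne'

lemma contOn2 : ContinuousOn (fun x : ℝ => (1 - x^2)^2 / Real.sqrt (2 - x^2)) (Set.uIcc 0 1) := by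
  apply ContinuousOn.div
  · fun_prop
  · fun_prop
  · exact fun x hx => (sqrt_two_sub_sq_pos hx).ne'

lemma int1 : ∫ x in Set.Ioo (0:ℝ) 1, (1 - x^2) / Real.sqrt (2 - x^2) = 1/2 := by
  rw [← MeasureTheory.integral_Ioc_eq_integral_Ioo,
    ← intervalIntegral.integral_of_le (by norm_num : (0:ℝ) ≤ 1)]
  rw [intervalIntegral.integral_eq_sub_of_hasDerivAt (fun x hx => deriv_F hx)
    (contOn1.intervalIntegrable)]
  norm_num

lemma int2 : ∫ x in Set.Ioo (0:ℝ) 1, (1 - x^2)^2 / Real.sqrt (2 - x^2) = π/8 := by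
  rw [← MeasureTheory.integral_Ioc_eq_integral_Ioo,
    ← intervalIntegral.integral_of_le (by norm_num : (0:ℝ) ≤ 1)]
  rw [intervalIntegral.integral_eq_sub_of_hasDerivAt (fun x hx => deriv_G hx)
    (contOn2.intervalIntegrable)]
  have harc : Real.arcsin (Real.sqrt 2)⁻¹ = π/4 := by
    have h1 : (Real.sqrt 2)⁻¹ = Real.sin (π/4) := by
      rw [Real.sin_pi_div_four, eq_div_iff (by norm_num), inv_mul_eq_div,
        div_eq_iff (by positivity : (0:ℝ) < Real.sqrt 2).ne']
      rw [show Real.sqrt 2 * Real.sqrt 2 = 2 from Real.mul_self_sqrt (by norm_num)]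
    rw [h1, Real.arcsin_sin (by linarith [Real.pi_pos]) (by linarith [Real.pi_pos])]
  simp [harc]
  ring

/-- The normalised vacuum expectation value of the scale Wilson loop
`λ₁λ₂λ₃λ₄` at `θ = π/2`, `α = 1` in quantum U(1)-Yang-Mills theory on
`ℤ₂ × ℤ₂`: with `A(a,b) = (1−a²)(1−b²)`, one has
`∫_{(0,1)²} A²/√((2−a²)(2−b²)) = π²/64` and hence the ratio
`((1/2)∫A²/√(⋯)) / (∫A/√(⋯)) = π²/32`. -/
theorem stmt_5 :
    (∫ p in (Set.Ioo (0:ℝ) 1) ×ˢ (Set.Ioo (0:ℝ) 1),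
        ((1 - p.1^2) * (1 - p.2^2))^2 / Real.sqrt ((2 - p.1^2) * (2 - p.2^2)))
      = π^2/64
    ∧ ((1/2) * ∫ p in (Set.Ioo (0:ℝ) 1) ×ˢ (Set.Ioo (0:ℝ) 1),
          ((1 - p.1^2) * (1 - p.2^2))^2 / Real.sqrt ((2 - p.1^2) * (2 - p.2^2)))
        / (∫ p in (Set.Ioo (0:ℝ) 1) ×ˢ (Set.Ioo (0:ℝ) 1),
            (1 - p.1^2) * (1 - p.2^2) / Real.sqrt ((2 - p.1^2) * (2 - p.2^2)))
      = π^2/32 := by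
  have hmem : ∀ x ∈ Set.Ioo (0:ℝ) 1, x ∈ Set.uIcc (0:ℝ) 1 := by
    intro x hx
    rw [Set.uIcc_of_le (by norm_num)]
    exact ⟨hx.1.le, hx.2.le⟩
  have hA : (∫ p in (Set.Ioo (0:ℝ) 1) ×ˢ (Set.Ioo (0:ℝ) 1),
        ((1 - p.1^2) * (1 - p.2^2))^2 / Real.sqrt ((2 - p.1^2) * (2 - p.2^2)))
      = π^2/64 := by
    have hcongr : (∫ p in (Set.Ioo (0:ℝ) 1) ×ˢ (Set.Ioo (0:ℝ) 1),
        ((1 - p.1^2) * (1 - p.2^2))^2 / Real.sqrt ((2 - p.1^2) * (2 - p.2^2)))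
      = ∫ p in (Set.Ioo (0:ℝ) 1) ×ˢ (Set.Ioo (0:ℝ) 1),
        ((1 - p.1^2)^2 / Real.sqrt (2 - p.1^2)) * ((1 - p.2^2)^2 / Real.sqrt (2 - p.2^2)) := by
      apply MeasureTheory.setIntegral_congr_fun (measurableSet_Ioo.prod measurableSet_Ioo)
      intro p hp
      have h1 := two_sub_sq_pos (hmem _ hp.1)
      simp only [Real.sqrt_mul h1.le, mul_pow, div_mul_div_comm]
    rw [hcongr, Measure.volume_eq_prod,
      MeasureTheory.setIntegral_prod_mul (fun a : ℝ => (1-a^2)^2 / Real.sqrt (2-a^2))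
        (fun b : ℝ => (1-b^2)^2 / Real.sqrt (2-b^2)), int2]
    ring
  refine ⟨hA, ?_⟩
  have hB : (∫ p in (Set.Ioo (0:ℝ) 1) ×ˢ (Set.Ioo (0:ℝ) 1),
        (1 - p.1^2) * (1 - p.2^2) / Real.sqrt ((2 - p.1^2) * (2 - p.2^2)))
      = 1/4 := by
    have hcongr : (∫ p in (Set.Ioo (0:ℝ) 1) ×ˢ (Set.Ioo (0:ℝ) 1),
        (1 - p.1^2) * (1 - p.2^2) / Real.sqrt ((2 - p.1^2) * (2 - p.2^2)))
      = ∫ p in (Set.Ioo (0:ℝ) 1) ×ˢ (Set.Ioo (0:ℝ) 1),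
        ((1 - p.1^2) / Real.sqrt (2 - p.1^2)) * ((1 - p.2^2) / Real.sqrt (2 - p.2^2)) := by
      apply MeasureTheory.setIntegral_congr_fun (measurableSet_Ioo.prod measurableSet_Ioo)
      intro p hp
      have h1 := two_sub_sq_pos (hmem _ hp.1)
      simp only [Real.sqrt_mul h1.le, div_mul_div_comm]
    rw [hcongr, Measure.volume_eq_prod,
      MeasureTheory.setIntegral_prod_mul (fun a : ℝ => (1-a^2) / Real.sqrt (2-a^2))
        (fun b : ℝ => (1-b^2) / Real.sqrt (2-b^2)), int1]
    norm_num
  rw [hA, hB]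
  ring
end

section
/- Set A(a,b) = (1 − a²)(1 − b²). The function (a,b) ↦ A(a,b) / ((1 − A(a,b)²)^{3/2} · √((2 − a²)(2 − b²))) is not Lebesgue integrable on (0,1)². -/
open Real MeasureTheory

lemma two_rpow_le_three : (2:ℝ) ^ ((3:ℝ)/2) ≤ 3 := by
  have h1 : (2:ℝ) ^ ((3:ℝ)/2) = 2 * Real.sqrt 2 := by
    rw [show (3:ℝ)/2 = 1 + 1/2 by norm_num, Real.rpow_add (by norm_num), Real.rpow_one,
      ← Real.sqrt_eq_rpow]
  have h2 : Real.sqrt 2 ≤ 3/2 := by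
    rw [show (3/2 : ℝ) = Real.sqrt ((3/2)^2) by rw [Real.sqrt_sq (by norm_num)]]
    exact Real.sqrt_le_sqrt (by norm_num)
  rw [h1]; linarith

/-- Pointwise lower bound for the integrand on `(0,1/2)²`. -/
lemma pointwise_bound {a b : ℝ} (ha : a ∈ Set.Ioo (0:ℝ) (1/2)) (hb : b ∈ Set.Ioo (0:ℝ) (1/2)) :
    (3/32) / (a + b)^3 ≤
      (1 - a^2) * (1 - b^2) /
        ((1 - ((1 - a^2) * (1 - b^2))^2) ^ ((3:ℝ)/2) * Real.sqrt ((2 - a^2) * (2 - b^2))) := by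
  obtain ⟨ha0, ha1⟩ := ha
  obtain ⟨hb0, hb1⟩ := hb
  set A : ℝ := (1 - a^2) * (1 - b^2) with hA
  have hab : 0 < a + b := by linarith
  have ha2 : a^2 < 1/4 := by nlinarith
  have hb2 : b^2 < 1/4 := by nlinarith
  have hN : (9:ℝ)/16 ≤ A := by
    have : (3/4 : ℝ) * (3/4) ≤ (1 - a^2) * (1 - b^2) :=
      mul_le_mul (by linarith) (by linarith) (by linarith) (by linarith)
    rw [hA]; linarith
  have hA0 : 0 < A := by rw [hA]; positivity
  have hA1 : A < 1 := by
    have h1 : a^2 * b^2 < a^2 * 1 :=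
      mul_lt_mul_of_pos_left (by linarith) (by positivity)
    have hbsq : 0 < b^2 := by positivity
    rw [hA]; nlinarith
  have h10 : 0 < 1 - A^2 := by nlinarith
  have h2 : 1 - A^2 ≤ 2 * (a + b)^2 := by nlinarith
  -- bound the rpow factor
  have hr1 : (1 - A^2) ^ ((3:ℝ)/2) ≤ (2 * (a+b)^2) ^ ((3:ℝ)/2) :=
    Real.rpow_le_rpow h10.le h2 (by norm_num)
  have hr2 : (2 * (a+b)^2 : ℝ) ^ ((3:ℝ)/2) = (2:ℝ) ^ ((3:ℝ)/2) * ((a+b)^2) ^ ((3:ℝ)/2) :=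
    Real.mul_rpow (by norm_num) (by positivity)
  have hr3 : (((a+b):ℝ)^2) ^ ((3:ℝ)/2) = (a+b)^3 := by
    rw [← Real.rpow_natCast (a+b) 2, ← Real.rpow_mul hab.le]
    norm_num
  have hr : (1 - A^2) ^ ((3:ℝ)/2) ≤ 3 * (a+b)^3 := by
    calc (1 - A^2) ^ ((3:ℝ)/2) ≤ (2:ℝ) ^ ((3:ℝ)/2) * ((a+b)^2) ^ ((3:ℝ)/2) := by
          rw [← hr2]; exact hr1
    _ ≤ 3 * (a+b)^3 := by
          rw [hr3]
          exact mul_le_mul_of_nonneg_right two_rpow_le_three (by positivity)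
  -- bound the sqrt factor
  have hs : Real.sqrt ((2 - a^2) * (2 - b^2)) ≤ 2 := by
    have h4 : Real.sqrt 4 = 2 := by
      rw [show (4:ℝ) = 2^2 by norm_num, Real.sqrt_sq (by norm_num)]
    exact (Real.sqrt_le_sqrt (by nlinarith)).trans h4.le
  have hspos : 0 < Real.sqrt ((2 - a^2) * (2 - b^2)) := Real.sqrt_pos.2 (by nlinarith)
  have hrpos : 0 < (1 - A^2) ^ ((3:ℝ)/2) := Real.rpow_pos_of_pos h10 _
  have hD : (1 - A^2) ^ ((3:ℝ)/2) * Real.sqrt ((2 - a^2) * (2 - b^2)) ≤ 6 * (a+b)^3 := by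
    calc (1 - A^2) ^ ((3:ℝ)/2) * Real.sqrt ((2 - a^2) * (2 - b^2))
        ≤ (3 * (a+b)^3) * 2 := mul_le_mul hr hs hspos.le (by positivity)
    _ = 6 * (a+b)^3 := by ring
  have hDpos : 0 < (1 - A^2) ^ ((3:ℝ)/2) * Real.sqrt ((2 - a^2) * (2 - b^2)) :=
    mul_pos hrpos hspos
  have h6pos : (0:ℝ) < 6 * (a+b)^3 := by positivity
  have key : (9/16 : ℝ) / (6 * (a+b)^3) ≤
      A / ((1 - A^2) ^ ((3:ℝ)/2) * Real.sqrt ((2 - a^2) * (2 - b^2))) :=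
    div_le_div₀ hA0.le hN hDpos hD
  have heq : (9/16 : ℝ) / (6 * (a+b)^3) = (3/32) / (a+b)^3 := by
    rw [mul_comm, ← div_div]; ring
  rw [heq] at key
  exact key

/-- Divergence of the full partition function of quantum U(1)-Yang-Mills theory
on `ℤ₂ × ℤ₂`: with `A(a,b) = (1−a²)(1−b²)`, the integrand
`A/((1−A²)^{3/2}√((2−a²)(2−b²)))` is not Lebesgue integrable on `(0,1)²`. -/
theorem stmt_7 :
    ¬ IntegrableOn
        (fun p : ℝ × ℝ =>
          (1 - p.1^2) * (1 - p.2^2) /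
            ((1 - ((1 - p.1^2) * (1 - p.2^2))^2) ^ ((3:ℝ)/2) *
              Real.sqrt ((2 - p.1^2) * (2 - p.2^2))))
        ((Set.Ioo (0:ℝ) 1) ×ˢ (Set.Ioo (0:ℝ) 1)) := by
  intro h
  set I : Set ℝ := Set.Ioo (0:ℝ) (1/2) with hI
  have hImeas : MeasurableSet I := measurableSet_Ioo
  set g : ℝ × ℝ → ℝ := fun p => (3/32) / (p.1 + p.2)^3 with hg
  -- restrict to the small square
  have hsub : I ×ˢ I ⊆ (Set.Ioo (0:ℝ) 1) ×ˢ (Set.Ioo (0:ℝ) 1) :=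
    Set.prod_mono (Set.Ioo_subset_Ioo_right (by norm_num))
      (Set.Ioo_subset_Ioo_right (by norm_num))
  have h' := h.mono_set hsub
  -- g is integrable on the small square
  have hgmeas : AEStronglyMeasurable g (volume.restrict (I ×ˢ I)) :=
    ((measurable_const.div
      (((measurable_fst.add measurable_snd).pow_const 3))).aestronglyMeasurable)
  have hgbound : ∀ᵐ p ∂(volume.restrict (I ×ˢ I)), ‖g p‖ ≤
      (1 - p.1^2) * (1 - p.2^2) /
        ((1 - ((1 - p.1^2) * (1 - p.2^2))^2) ^ ((3:ℝ)/2) *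
          Real.sqrt ((2 - p.1^2) * (2 - p.2^2))) := by
    rw [ae_restrict_iff' (hImeas.prod hImeas)]
    refine Filter.Eventually.of_forall fun p hp => ?_
    obtain ⟨hp1, hp2⟩ := hp
    have hgp : 0 ≤ g p := by
      have : 0 < p.1 + p.2 := add_pos hp1.1 hp2.1
      positivity
    rw [Real.norm_of_nonneg hgp]
    exact pointwise_bound hp1 hp2
  have hgint : IntegrableOn g (I ×ˢ I) := h'.mono' hgmeas hgbound
  -- rewrite as product measure
  have hgint' : Integrable g ((volume.restrict I).prod (volume.restrict I)) := by
    rwa [Measure.prod_restrict]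
  -- the marginal is integrable
  have hF : Integrable (fun a => ∫ b, ‖g (a, b)‖ ∂(volume.restrict I))
      (volume.restrict I) := hgint'.integral_norm_prod_left
  -- for each a ∈ I, b ↦ ‖g (a,b)‖ is integrable on I
  have hslice : ∀ a : ℝ, 0 < a → IntegrableOn (fun b => ‖g (a, b)‖) I := by
    intro a ha
    have hc : ContinuousOn (fun b => ‖g (a, b)‖) (Set.Icc (0:ℝ) (1/2)) := by
      apply ContinuousOn.norm
      apply ContinuousOn.div continuousOn_const
      · exact ((continuous_const.add continuous_id).pow 3).continuousOn
      · intro b hb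
        have : 0 < a + b := by have := hb.1; linarith
        positivity
    exact (hc.integrableOn_Icc).mono_set Set.Ioo_subset_Icc_self
  -- lower bound on the marginal
  have hFlb : ∀ a ∈ I, (3/256) / a^2 ≤ ∫ b, ‖g (a, b)‖ ∂(volume.restrict I) := by
    intro a ha
    obtain ⟨ha0, ha1⟩ := ha
    have hsub2 : Set.Ioo (0:ℝ) a ⊆ I := Set.Ioo_subset_Ioo_right ha1.le
    have step1 : ∫ b in Set.Ioo (0:ℝ) a, ‖g (a, b)‖ ≤ ∫ b in I, ‖g (a, b)‖ :=
      setIntegral_mono_set (hslice a ha0)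
        (Filter.Eventually.of_forall fun b => norm_nonneg _)
        (HasSubset.Subset.eventuallyLE hsub2)
    have step2 : (3/256) / a^3 * (volume (Set.Ioo (0:ℝ) a)).toReal ≤
        ∫ b in Set.Ioo (0:ℝ) a, ‖g (a, b)‖ := by
      apply setIntegral_ge_of_const_le_real measurableSet_Ioo
        (by simp [Real.volume_Ioo])
      · intro b hb
        obtain ⟨hb0, hba⟩ := hb
        have hab : 0 < a + b := by linarith
        have hgab : g (a, b) = (3/32) / (a + b)^3 := rfl
        rw [Real.norm_of_nonneg (by rw [hgab]; positivity), hgab]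
        have h1 : (a + b)^3 ≤ 8 * a^3 := by
          calc (a + b)^3 ≤ (2*a)^3 := pow_le_pow_left₀ hab.le (by linarith) 3
          _ = 8 * a^3 := by ring
        have heq : (3/256 : ℝ) / a^3 = (3/32) / (8 * a^3) := by
          rw [mul_comm, ← div_div]; ring
        rw [heq]
        exact div_le_div_of_nonneg_left (by norm_num) (by positivity) h1
      · exact (hslice a ha0).mono_set hsub2
    have hvol : (volume (Set.Ioo (0:ℝ) a)).toReal = a := by
      rw [Real.volume_Ioo]; simp [ENNReal.toReal_ofReal ha0.le]
    rw [hvol] at step2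
    have : (3/256 : ℝ) / a^3 * a = (3/256) / a^2 := by
      field_simp
    rw [this] at step2
    exact step2.trans step1
  -- hence a ↦ (3/256)/a² is integrable on I
  have hH : IntegrableOn (fun a : ℝ => (3/256) / a^2) I := by
    have hm : Measurable (fun a : ℝ => (3:ℝ)/256 / a^2) := by fun_prop
    apply hF.mono' hm.aestronglyMeasurable
    rw [ae_restrict_iff' hImeas]
    refine Filter.Eventually.of_forall fun a ha => ?_
    have h0 : (0:ℝ) ≤ (3/256) / a^2 := by positivity
    rw [Real.norm_of_nonneg h0]
    exact hFlb a ha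
  -- hence a ↦ a ^ (-2 : ℝ) is integrable on I, contradiction
  have hH2 : IntegrableOn (fun a : ℝ => a ^ (-2 : ℝ)) I := by
    refine IntegrableOn.congr_fun (hH.const_mul (256/3)) (fun a ha => ?_) hImeas
    have ha0 : 0 < a := ha.1
    rw [Real.rpow_neg ha0.le, show (2:ℝ) = ((2:ℕ):ℝ) by norm_num,
      Real.rpow_natCast]
    field_simp
  rw [intervalIntegral.integrableOn_Ioo_rpow_iff (by norm_num : (0:ℝ) < 1/2)] at hH2
  norm_num at hH2
end

section
/- Let n ≥ 1 and G = (ℤ/2ℤ)ⁿ, with the complex Ωᵏ = {functions G → Λᵏ(ℂⁿ)} and differential (dω)(x) = Σ_a e_a ∧ (∂ᵃω)(x). For every k with 0 ≤ k ≤ n, the k-th cohomology ker(d : Ωᵏ → Ω^{k+1}) / im(d : Ω^{k−1} → Ωᵏ) has ℂ-dimension binomial(n, k), and it is represented by the constant forms, i.e. the constant functions with values in Λᵏ(ℂⁿ). -/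
open Finset

/-- Differential forms on the lattice `(ℤ₂)ⁿ`: functions with values in the
exterior algebra `Λ(ℂⁿ)`. -/
abbrev FormSpace (n : ℕ) := (Fin n → ZMod 2) → ExteriorAlgebra ℂ (Fin n → ℂ)

/-- The exterior differential `(dω)(x) = Σ_a e_a ∧ (∂ᵃω)(x)` as a linear map,
where `(∂ᵃω)(x) = ω(x + e_a) − ω(x)`. -/
noncomputable def dL (n : ℕ) : FormSpace n →ₗ[ℂ] FormSpace n where
  toFun ω := fun x =>
    ∑ a, ExteriorAlgebra.ι ℂ (Pi.single a (1:ℂ)) * (ω (x + Pi.single a 1) - ω x)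
  map_add' ω η := by
    funext x
    simp only [Pi.add_apply]
    rw [← Finset.sum_add_distrib]
    refine Finset.sum_congr rfl fun a _ => ?_
    rw [← mul_add]
    congr 1
    abel
  map_smul' c ω := by
    funext x
    simp only [Pi.smul_apply, RingHom.id_apply]
    rw [Finset.smul_sum]
    refine Finset.sum_congr rfl fun a _ => ?_
    rw [← smul_sub, mul_smul_comm]

/-- The grade-`k` part `Λᵏ(ℂⁿ)` of the exterior algebra, as a submodule. -/
noncomputable def gradePart (n k : ℕ) : Submodule ℂ (ExteriorAlgebra ℂ (Fin n → ℂ)) :=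
  (LinearMap.range (ExteriorAlgebra.ι ℂ :
      (Fin n → ℂ) →ₗ[ℂ] ExteriorAlgebra ℂ (Fin n → ℂ))) ^ k

/-- `Ωᵏ`: the `Λᵏ(ℂⁿ)`-valued functions on `(ℤ₂)ⁿ`, as a submodule. -/
noncomputable def OmegaK (n k : ℕ) : Submodule ℂ (FormSpace n) :=
  Submodule.pi Set.univ (fun _ => gradePart n k)

/-- The closed `k`-forms. -/
noncomputable def Zk (n k : ℕ) : Submodule ℂ (FormSpace n) :=
  OmegaK n k ⊓ LinearMap.ker (dL n)

/-- The exact `k`-forms (`⊥` in degree 0). -/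
noncomputable def Bk (n k : ℕ) : Submodule ℂ (FormSpace n) :=
  if k = 0 then ⊥ else Submodule.map (dL n) (OmegaK n (k - 1))


namespace NC12


noncomputable section
variable (n : ℕ)

/-- shift endomorphism -/
def Sh (v : Fin n → ZMod 2) : Module.End ℂ (FormSpace n) where
  toFun ω := fun x => ω (x + v)
  map_add' _ _ := rfl
  map_smul' _ _ := rfl

@[simp] lemma Sh_apply (v : Fin n → ZMod 2) (ω : FormSpace n) (x) :
    Sh n v ω x = ω (x + v) := rfl

def vG (a : ℕ) : Fin n → ZMod 2 := if h : a < n then Pi.single ⟨a,h⟩ 1 else 0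
def vC (a : ℕ) : Fin n → ℂ := if h : a < n then Pi.single ⟨a,h⟩ 1 else 0
def vD (a : ℕ) : Module.Dual ℂ (Fin n → ℂ) := if h : a < n then LinearMap.proj ⟨a,h⟩ else 0

def DelE (a : ℕ) : Module.End ℂ (FormSpace n) := Sh n (vG n a) - 1

@[simp] lemma DelE_apply (a : ℕ) (ω : FormSpace n) (x) :
    DelE n a ω x = ω (x + vG n a) - ω x := rfl

def EpsE (a : ℕ) : Module.End ℂ (FormSpace n) :=
  (LinearMap.mulLeft ℂ (ExteriorAlgebra.ι ℂ (vC n a))).compLeft _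

@[simp] lemma EpsE_apply (a : ℕ) (ω : FormSpace n) (x) :
    EpsE n a ω x = ExteriorAlgebra.ι ℂ (vC n a) * ω x := rfl

def IotE (a : ℕ) : Module.End ℂ (FormSpace n) :=
  (CliffordAlgebra.contractLeft (vD n a)).compLeft _

@[simp] lemma IotE_apply (a : ℕ) (ω : FormSpace n) (x) :
    IotE n a ω x = CliffordAlgebra.contractLeft (vD n a) (ω x) := rfl

def AvgE (a : ℕ) : Module.End ℂ (FormSpace n) := 1 + (2⁻¹:ℂ) • DelE n a

lemma zmod2_add_self (c : ZMod 2) : c + c = 0 := by revert c; decide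

lemma vG_add_self (a : ℕ) (x : Fin n → ZMod 2) : x + vG n a + vG n a = x := by
  funext i; simp [add_assoc, zmod2_add_self]

lemma Del_comm (a b : ℕ) : DelE n a * DelE n b = DelE n b * DelE n a := by
  refine LinearMap.ext fun ω => funext fun x => ?_
  simp only [Module.End.mul_apply, DelE_apply]
  rw [add_right_comm x (vG n b) (vG n a)]
  abel

lemma Del_Eps_comm (a b : ℕ) : DelE n a * EpsE n b = EpsE n b * DelE n a := by
  refine LinearMap.ext fun ω => funext fun x => ?_
  simp only [Module.End.mul_apply, DelE_apply, EpsE_apply, mul_sub]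

lemma Del_Iot_comm (a b : ℕ) : DelE n a * IotE n b = IotE n b * DelE n a := by
  refine LinearMap.ext fun ω => funext fun x => ?_
  simp only [Module.End.mul_apply, DelE_apply, IotE_apply, map_sub]

lemma Del_sq (a : ℕ) : DelE n a * DelE n a = (-2 : ℂ) • DelE n a := by
  refine LinearMap.ext fun ω => funext fun x => ?_
  simp only [Module.End.mul_apply, DelE_apply, LinearMap.smul_apply, Pi.smul_apply,
    vG_add_self, neg_smul, two_smul]
  abel

/-- the pairing coefficient -/
def κ (a b : ℕ) : ℂ := vD n a (vC n b)

lemma Iot_Eps (a b : ℕ) :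
    IotE n a * EpsE n b = κ n a b • 1 - EpsE n b * IotE n a := by
  refine LinearMap.ext fun ω => funext fun x => ?_
  simp only [Module.End.mul_apply, IotE_apply, EpsE_apply, LinearMap.sub_apply,
    LinearMap.smul_apply, Module.End.one_apply, Pi.sub_apply, Pi.smul_apply,
    CliffordAlgebra.contractLeft_ι_mul, κ]

lemma kappa_smul_Del (a : ℕ) : κ n a a • DelE n a = DelE n a := by
  by_cases h : a < n
  · have : κ n a a = 1 := by simp [κ, vD, vC, h]
    rw [this, one_smul]
  · have h0 : vG n a = 0 := by simp [vG, h]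
    have : DelE n a = 0 := by
      refine LinearMap.ext fun ω => funext fun x => ?_
      simp [h0]
    simp [this]


lemma vG_coe (a : Fin n) : vG n ↑a = Pi.single a 1 := by simp [vG, a.isLt]
lemma vC_coe (a : Fin n) : vC n ↑a = Pi.single a 1 := by simp [vC, a.isLt]

lemma dL_eq : (dL n : Module.End ℂ (FormSpace n)) = ∑ b ∈ Finset.range n, EpsE n b * DelE n b := by
  refine LinearMap.ext fun ω => funext fun x => ?_
  have : (∑ b ∈ Finset.range n, EpsE n b * DelE n b) ω x
      = ∑ b ∈ Finset.range n,
          ExteriorAlgebra.ι ℂ (vC n b) * (ω (x + vG n b) - ω x) := by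
    rw [LinearMap.sum_apply, Finset.sum_apply]
    exact Finset.sum_congr rfl fun b _ => rfl
  rw [this, ← Fin.sum_univ_eq_sum_range
    (fun b => ExteriorAlgebra.ι ℂ (vC n b) * (ω (x + vG n b) - ω x)) n]
  show ∑ a : Fin n, _ = _
  refine Finset.sum_congr rfl fun a _ => ?_
  rw [vC_coe, vG_coe]

-- right-associated commutation helpers
lemma Del_Eps_comm' (a b : ℕ) (X : Module.End ℂ (FormSpace n)) :
    DelE n a * (EpsE n b * X) = EpsE n b * (DelE n a * X) := by
  rw [← mul_assoc, Del_Eps_comm, mul_assoc]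

lemma Del_Iot_comm' (a b : ℕ) (X : Module.End ℂ (FormSpace n)) :
    DelE n a * (IotE n b * X) = IotE n b * (DelE n a * X) := by
  rw [← mul_assoc, Del_Iot_comm, mul_assoc]

lemma kappa_diag (a : ℕ) (h : a < n) : κ n a a = 1 := by
  simp [κ, vD, vC, h]

lemma kappa_off (a b : ℕ) (h : a ≠ b) : κ n a b = 0 := by
  unfold κ vD vC
  split_ifs with h1 h2 h2
  · have hne : (⟨a, h1⟩ : Fin n) ≠ ⟨b, h2⟩ := by simp [Fin.ext_iff]; exact h
    rw [LinearMap.proj_apply]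
    exact Pi.single_eq_of_ne hne 1
  all_goals simp

lemma anticomm_term (a b : ℕ) :
    (EpsE n b * DelE n b) * (IotE n a * DelE n a)
      + (IotE n a * DelE n a) * (EpsE n b * DelE n b)
    = κ n a b • (DelE n a * DelE n b) := by
  simp only [mul_assoc]
  rw [Del_Iot_comm', Del_comm n b a, Del_Eps_comm',
    ← mul_assoc (IotE n a) (EpsE n b) (DelE n a * DelE n b), Iot_Eps,
    sub_mul, smul_mul_assoc, one_mul, mul_assoc]
  abel

lemma kappa_sum (a : ℕ) :
    ∑ b ∈ Finset.range n, κ n a b • (DelE n a * DelE n b) = DelE n a * DelE n a := by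
  by_cases h : a < n
  · rw [Finset.sum_eq_single a]
    · rw [kappa_diag n a h, one_smul]
    · intro b _ hb
      rw [kappa_off n a b (Ne.symm hb), zero_smul]
    · intro hc
      exact absurd (Finset.mem_range.2 h) hc
  · have hD : DelE n a = 0 := by
      have h0 : vG n a = 0 := by simp [vG, h]
      refine LinearMap.ext fun ω => funext fun x => ?_
      simp [h0]
    simp [hD]

def hE (a : ℕ) : Module.End ℂ (FormSpace n) := IotE n a * ((4⁻¹:ℂ) • DelE n a)

lemma one_sub_Avg (a : ℕ) : 1 - AvgE n a = -((2⁻¹:ℂ) • DelE n a) := by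
  rw [AvgE]; abel

lemma d_hE_anticomm (a : ℕ) :
    dL n * hE n a + hE n a * dL n = 1 - AvgE n a := by
  rw [one_sub_Avg, dL_eq, hE, Finset.sum_mul, Finset.mul_sum, ← Finset.sum_add_distrib]
  have : ∀ b ∈ Finset.range n,
      EpsE n b * DelE n b * (IotE n a * ((4⁻¹:ℂ) • DelE n a))
        + IotE n a * ((4⁻¹:ℂ) • DelE n a) * (EpsE n b * DelE n b)
      = (4⁻¹:ℂ) • (κ n a b • (DelE n a * DelE n b)) := by
    intro b _
    rw [mul_smul_comm (4⁻¹:ℂ) (IotE n a) (DelE n a),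
      mul_smul_comm (4⁻¹:ℂ) (EpsE n b * DelE n b) (IotE n a * DelE n a),
      smul_mul_assoc, ← smul_add, anticomm_term]
  rw [Finset.sum_congr rfl this, ← Finset.smul_sum, kappa_sum, Del_sq, smul_smul]
  have h4 : (4⁻¹ * -2 : ℂ) = -(2⁻¹) := by norm_num
  rw [h4, neg_smul]

def Pp : ℕ → Module.End ℂ (FormSpace n)
  | 0 => 1
  | (m+1) => Pp m * AvgE n m

def Hh : ℕ → Module.End ℂ (FormSpace n)
  | 0 => 0
  | (m+1) => Hh m + Pp n m * hE n m

lemma dL_Del_comm (a : ℕ) : dL n * DelE n a = DelE n a * dL n := by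
  rw [dL_eq, Finset.sum_mul, Finset.mul_sum]
  refine Finset.sum_congr rfl fun b _ => ?_
  rw [mul_assoc, Del_comm, ← mul_assoc, ← Del_Eps_comm, mul_assoc]

lemma dL_Avg_comm (a : ℕ) : dL n * AvgE n a = AvgE n a * dL n := by
  rw [AvgE, mul_add, add_mul, mul_one, one_mul, mul_smul_comm, smul_mul_assoc, dL_Del_comm]

lemma dL_Pp_comm (m : ℕ) : dL n * Pp n m = Pp n m * dL n := by
  induction m with
  | zero => rw [Pp, mul_one, one_mul]
  | succ m ih => rw [Pp, ← mul_assoc, ih, mul_assoc, dL_Avg_comm, mul_assoc]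

theorem homotopy (m : ℕ) :
    dL n * Hh n m + Hh n m * dL n = 1 - Pp n m := by
  induction m with
  | zero => simp [Hh, Pp]
  | succ m ih =>
    have key : dL n * (Pp n m * hE n m) + Pp n m * hE n m * dL n
        = Pp n m - Pp n (m+1) := by
      rw [← mul_assoc, dL_Pp_comm, mul_assoc, mul_assoc, ← mul_add, d_hE_anticomm,
        mul_sub, mul_one, Pp]
    rw [Hh, mul_add, add_mul]
    calc dL n * Hh n m + dL n * (Pp n m * hE n m) + (Hh n m * dL n + Pp n m * hE n m * dL n)
        = (dL n * Hh n m + Hh n m * dL n)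
          + (dL n * (Pp n m * hE n m) + Pp n m * hE n m * dL n) := by abel
      _ = (1 - Pp n m) + (Pp n m - Pp n (m+1)) := by rw [ih, key]
      _ = 1 - Pp n (m+1) := by abel

def avgL : FormSpace n →ₗ[ℂ] ExteriorAlgebra ℂ (Fin n → ℂ) where
  toFun ω := ((2:ℂ)^n)⁻¹ • ∑ x, ω x
  map_add' ω η := by
    simp only [Pi.add_apply, Finset.sum_add_distrib, smul_add]
  map_smul' c ω := by
    simp only [Pi.smul_apply, ← Finset.smul_sum, RingHom.id_apply, smul_comm c]

@[simp] lemma avgL_apply (ω : FormSpace n) : avgL n ω = ((2:ℂ)^n)⁻¹ • ∑ x, ω x := rfl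

def constL : ExteriorAlgebra ℂ (Fin n → ℂ) →ₗ[ℂ] FormSpace n :=
  LinearMap.pi fun _ => LinearMap.id

@[simp] lemma constL_apply (v : ExteriorAlgebra ℂ (Fin n → ℂ)) (x) : constL n v x = v := rfl

lemma sum_shift (ω : FormSpace n) (v : Fin n → ZMod 2) :
    ∑ x, ω (x + v) = ∑ x, ω x :=
  Fintype.sum_equiv (Equiv.addRight v) _ _ (fun _ => rfl)

lemma avg_Sh (v : Fin n → ZMod 2) (ω : FormSpace n) : avgL n (Sh n v ω) = avgL n ω := by
  simp only [avgL_apply, Sh_apply, sum_shift]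

lemma avg_Avg (a : ℕ) (ω : FormSpace n) : avgL n (AvgE n a ω) = avgL n ω := by
  have : AvgE n a ω = ω + (2⁻¹:ℂ) • (Sh n (vG n a) ω - ω) := rfl
  rw [this, map_add, map_smul, map_sub, avg_Sh, sub_self, smul_zero, add_zero]

lemma avg_Pp (m : ℕ) (ω : FormSpace n) : avgL n (Pp n m ω) = avgL n ω := by
  induction m generalizing ω with
  | zero => rfl
  | succ m ih =>
    have : Pp n (m+1) ω = Pp n m (AvgE n m ω) := rfl
    rw [this, ih, avg_Avg]

lemma avg_dL (ω : FormSpace n) : avgL n (dL n ω) = 0 := by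
  simp only [avgL_apply]
  have : ∑ x, dL n ω x = 0 := by
    have hdef : ∑ x, dL n ω x
        = ∑ x, ∑ a : Fin n, ExteriorAlgebra.ι ℂ (Pi.single a (1:ℂ)) *
            (ω (x + Pi.single a 1) - ω x) := rfl
    rw [hdef, Finset.sum_comm]
    refine Finset.sum_eq_zero fun a _ => ?_
    rw [← Finset.mul_sum]
    have : ∑ x, (ω (x + Pi.single a 1) - ω x) = 0 := by
      rw [Finset.sum_sub_distrib, sum_shift, sub_self]
    rw [this, mul_zero]
  rw [this, smul_zero]

lemma card_G : Fintype.card (Fin n → ZMod 2) = 2^n := by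
  rw [Fintype.card_fun, ZMod.card, Fintype.card_fin]

lemma avg_const (v : ExteriorAlgebra ℂ (Fin n → ℂ)) : avgL n (constL n v) = v := by
  simp only [avgL_apply, constL_apply, Finset.sum_const, Finset.card_univ, card_G]
  rw [← Nat.cast_smul_eq_nsmul ℂ, smul_smul]
  norm_num

lemma Sh_Avg_self (a : ℕ) : Sh n (vG n a) * AvgE n a = AvgE n a := by
  refine LinearMap.ext fun ω => funext fun x => ?_
  show AvgE n a ω (x + vG n a) = AvgE n a ω x
  show ω (x + vG n a) + (2⁻¹:ℂ) • (ω (x + vG n a + vG n a) - ω (x + vG n a))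
      = ω x + (2⁻¹:ℂ) • (ω (x + vG n a) - ω x)
  rw [vG_add_self]
  module

lemma Sh_Avg_comm (v : Fin n → ZMod 2) (b : ℕ) :
    Sh n v * AvgE n b = AvgE n b * Sh n v := by
  refine LinearMap.ext fun ω => funext fun x => ?_
  show ω (x + v) + (2⁻¹:ℂ) • (ω (x + v + vG n b) - ω (x + v))
      = ω (x + v) + (2⁻¹:ℂ) • (ω (x + vG n b + v) - ω (x + v))
  rw [add_right_comm x v (vG n b)]

lemma Sh_Pp_comm (v : Fin n → ZMod 2) (m : ℕ) :
    Sh n v * Pp n m = Pp n m * Sh n v := by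
  induction m with
  | zero => rw [Pp, mul_one, one_mul]
  | succ m ih => rw [Pp, ← mul_assoc, ih, mul_assoc, Sh_Avg_comm, mul_assoc]

lemma Sh_Pp (a m : ℕ) (h : a < m) : Sh n (vG n a) * Pp n m = Pp n m := by
  induction m with
  | zero => omega
  | succ m ih =>
    rcases Nat.lt_succ_iff_lt_or_eq.1 h with h' | h'
    · rw [Pp, ← mul_assoc, ih h']
    · subst h'
      show Sh n (vG n a) * Pp n (a+1) = Pp n (a+1)
      rw [Pp, ← mul_assoc, Sh_Pp_comm, mul_assoc, Sh_Avg_self]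

lemma const_eval (g : FormSpace n)
    (hg : ∀ (a : Fin n) (x : Fin n → ZMod 2), g (x + Pi.single a 1) = g x) :
    ∀ x, g x = g 0 := by
  have key : ∀ (s : Finset (Fin n)) (x : Fin n → ZMod 2) (y : Fin n → ZMod 2),
      g (y + ∑ a ∈ s, Pi.single a (x a)) = g y := by
    intro s
    induction s using Finset.induction_on with
    | empty => intro x y; simp
    | @insert a s ha ih =>
      intro x y
      rw [Finset.sum_insert ha, ← add_assoc]
      have h2 := ih x (y + Pi.single a (x a))
      rw [h2]
      have h01 : ∀ c : ZMod 2, c = 0 ∨ c = 1 := by decide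
      rcases h01 (x a) with hc | hc
      · rw [hc]; simp
      · rw [hc]; exact hg a y
  intro x
  have := key Finset.univ x 0
  rw [Finset.univ_sum_single, zero_add] at this
  exact this

lemma Pp_top (ω : FormSpace n) (x : Fin n → ZMod 2) :
    Pp n n ω x = avgL n ω := by
  have hsh : ∀ (a : Fin n) (y : Fin n → ZMod 2),
      Pp n n ω (y + Pi.single a 1) = Pp n n ω y := by
    intro a y
    rw [← vG_coe n a]
    exact congrFun (LinearMap.congr_fun (Sh_Pp n ↑a n a.isLt) ω) y
  have hc := const_eval n (Pp n n ω) hsh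
  have hconst : Pp n n ω = constL n (Pp n n ω 0) := by
    funext y
    rw [hc y]
    exact (constL_apply n _ y).symm
  have hval : avgL n (Pp n n ω) = Pp n n ω 0 := by
    rw [hconst, avg_const]
    exact (constL_apply n _ 0).symm
  rw [hc x, ← hval, avg_Pp]
lemma contract_grade (d : Module.Dual ℂ (Fin n → ℂ)) {k : ℕ}
    {v : ExteriorAlgebra ℂ (Fin n → ℂ)} (hv : v ∈ gradePart n k) :
    CliffordAlgebra.contractLeft d v ∈ gradePart n (k-1)
      ∧ (k = 0 → CliffordAlgebra.contractLeft d v = 0) := by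
  refine Submodule.pow_induction_on_left'
    (LinearMap.range (ExteriorAlgebra.ι ℂ : (Fin n → ℂ) →ₗ[ℂ] _))
    (C := fun i x _ => CliffordAlgebra.contractLeft d x ∈ gradePart n (i-1)
      ∧ (i = 0 → CliffordAlgebra.contractLeft d x = 0)) ?_ ?_ ?_ hv
  · intro r
    rw [CliffordAlgebra.contractLeft_algebraMap]
    exact ⟨Submodule.zero_mem _, fun _ => rfl⟩
  · intro x y i hx hy ⟨h1, h2⟩ ⟨h3, h4⟩
    rw [map_add]
    exact ⟨Submodule.add_mem _ h1 h3, fun h0 => by rw [h2 h0, h4 h0, add_zero]⟩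
  · intro m hm i x hx ⟨h1, h2⟩
    obtain ⟨u, rfl⟩ := hm
    constructor
    · rw [CliffordAlgebra.contractLeft_ι_mul]
      have hfst : d u • x ∈ gradePart n i := Submodule.smul_mem _ _ hx
      have hsnd : ExteriorAlgebra.ι ℂ u * CliffordAlgebra.contractLeft d x
          ∈ gradePart n i := by
        cases i with
        | zero => rw [h2 rfl, mul_zero]; exact Submodule.zero_mem _
        | succ j =>
          have : gradePart n (j+1)
              = LinearMap.range (ExteriorAlgebra.ι ℂ : (Fin n → ℂ) →ₗ[ℂ] _)
                * gradePart n j := by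
            rw [gradePart, gradePart, pow_succ']
          rw [this]
          exact Submodule.mul_mem_mul (LinearMap.mem_range_self _ u)
            (by simpa using h1)
      simpa using Submodule.sub_mem _ hfst hsnd
    · intro h0; exact absurd h0 (Nat.succ_ne_zero i)

lemma mem_OmegaK {k : ℕ} {ω : FormSpace n} :
    ω ∈ OmegaK n k ↔ ∀ x, ω x ∈ gradePart n k := by
  constructor
  · intro h x; exact h x (Set.mem_univ x)
  · intro h x _; exact h x

lemma Sh_mem {k : ℕ} (v) {ω : FormSpace n} (h : ω ∈ OmegaK n k) :
    Sh n v ω ∈ OmegaK n k :=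
  (mem_OmegaK n).2 fun x => (mem_OmegaK n).1 h (x + v)

lemma Del_mem {k : ℕ} (a : ℕ) {ω : FormSpace n} (h : ω ∈ OmegaK n k) :
    DelE n a ω ∈ OmegaK n k :=
  (mem_OmegaK n).2 fun x =>
    Submodule.sub_mem _ ((mem_OmegaK n).1 h _) ((mem_OmegaK n).1 h _)

lemma Avg_mem {k : ℕ} (a : ℕ) {ω : FormSpace n} (h : ω ∈ OmegaK n k) :
    AvgE n a ω ∈ OmegaK n k := by
  have : AvgE n a ω = ω + (2⁻¹:ℂ) • (DelE n a ω) := rfl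
  rw [this]
  exact Submodule.add_mem _ h (Submodule.smul_mem _ _ (Del_mem n a h))

lemma Pp_mem {k : ℕ} (m : ℕ) {ω : FormSpace n} (h : ω ∈ OmegaK n k) :
    Pp n m ω ∈ OmegaK n k := by
  induction m generalizing ω with
  | zero => exact h
  | succ m ih => exact ih (Avg_mem n m h)

lemma hE_mem {k : ℕ} (a : ℕ) {ω : FormSpace n} (h : ω ∈ OmegaK n k) :
    hE n a ω ∈ OmegaK n (k-1) := by
  refine (mem_OmegaK n).2 fun x => ?_
  have hmem : ((4⁻¹:ℂ) • DelE n a ω) x ∈ gradePart n k :=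
    (mem_OmegaK n).1 (Submodule.smul_mem _ _ (Del_mem n a h)) x
  exact (contract_grade n (vD n a) hmem).1

lemma hE_zero (a : ℕ) {ω : FormSpace n} (h : ω ∈ OmegaK n 0) :
    hE n a ω = 0 := by
  funext x
  have hmem : ((4⁻¹:ℂ) • DelE n a ω) x ∈ gradePart n 0 :=
    (mem_OmegaK n).1 (Submodule.smul_mem _ _ (Del_mem n a h)) x
  exact (contract_grade n (vD n a) hmem).2 rfl

lemma Hh_mem {k : ℕ} (m : ℕ) {ω : FormSpace n} (h : ω ∈ OmegaK n k) :
    Hh n m ω ∈ OmegaK n (k-1) := by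
  induction m with
  | zero => exact Submodule.zero_mem _
  | succ m ih =>
    have : Hh n (m+1) ω = Hh n m ω + Pp n m (hE n m ω) := rfl
    rw [this]
    exact Submodule.add_mem _ ih (Pp_mem n m (hE_mem n m h))

lemma Hh_zero (m : ℕ) {ω : FormSpace n} (h : ω ∈ OmegaK n 0) :
    Hh n m ω = 0 := by
  induction m with
  | zero => rfl
  | succ m ih =>
    have : Hh n (m+1) ω = Hh n m ω + Pp n m (hE n m ω) := rfl
    rw [this, ih, hE_zero n m h, map_zero, add_zero]

lemma avg_mem {k : ℕ} {ω : FormSpace n} (h : ω ∈ OmegaK n k) :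
    avgL n ω ∈ gradePart n k :=
  Submodule.smul_mem _ _ (Submodule.sum_mem _ fun x _ => (mem_OmegaK n).1 h x)

lemma const_mem {k : ℕ} {v : ExteriorAlgebra ℂ (Fin n → ℂ)} (h : v ∈ gradePart n k) :
    constL n v ∈ OmegaK n k :=
  (mem_OmegaK n).2 fun _ => h

lemma dL_const (v : ExteriorAlgebra ℂ (Fin n → ℂ)) : dL n (constL n v) = 0 := by
  funext x
  show ∑ a : Fin n, ExteriorAlgebra.ι ℂ (Pi.single a (1:ℂ)) * (v - v) = _
  simp

def ιe (i : Fin n) : ExteriorAlgebra ℂ (Fin n → ℂ) :=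
  ExteriorAlgebra.ι ℂ (Pi.single i 1)

def prodL (l : List (Fin n)) : ExteriorAlgebra ℂ (Fin n → ℂ) := (l.map (ιe n)).prod

@[simp] lemma prodL_nil : prodL n [] = 1 := rfl

@[simp] lemma prodL_cons (a : Fin n) (l : List (Fin n)) :
    prodL n (a :: l) = ιe n a * prodL n l := by
  simp [prodL]

lemma ιe_anticomm (a b : Fin n) : ιe n a * ιe n b = -(ιe n b * ιe n a) := by
  have h := ExteriorAlgebra.ι_add_mul_swap (R := ℂ)
    (Pi.single a 1 : Fin n → ℂ) (Pi.single b 1 : Fin n → ℂ)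
  rw [eq_neg_iff_add_eq_zero]
  exact h

lemma ιe_sq (a : Fin n) : ιe n a * ιe n a = 0 := ExteriorAlgebra.ι_sq_zero _

lemma mul_sorted (a : Fin n) :
    ∀ (l : List (Fin n)), l.Pairwise (· < ·) →
      ιe n a * prodL n l =
        if a ∈ l then 0
        else ((-1:ℂ)^((l.filter (fun b => decide (b < a))).length))
          • prodL n (l.orderedInsert (·≤·) a) := by
  intro l
  induction l with
  | nil =>
    intro _
    simp [List.orderedInsert]
  | cons b t ih =>
    intro hs
    have hbt := (List.pairwise_cons.1 hs).1
    have hts := (List.pairwise_cons.1 hs).2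
    rcases lt_trichotomy a b with hab | hab | hab
    · -- a < b : a not in list, inserted at front
      have hnotin : a ∉ b :: t := by
        intro hmem
        rcases List.mem_cons.1 hmem with h | h
        · exact absurd hab (by rw [h]; exact lt_irrefl b)
        · exact absurd (lt_trans hab (hbt a h)) (lt_irrefl a)
      rw [if_neg hnotin, List.orderedInsert_cons_of_le _ _ (le_of_lt hab)]
      have hfil : (b :: t).filter (fun c => decide (c < a)) = [] := by
        rw [List.filter_eq_nil_iff]
        intro c hc
        rcases List.mem_cons.1 hc with h | h
        · simp [h, not_lt.2 (le_of_lt hab)]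
        · simp [not_lt.2 (le_of_lt (lt_trans hab (hbt c h)))]
      rw [hfil]
      simp
    · -- a = b
      subst hab
      rw [if_pos (List.mem_cons_self), prodL_cons, ← mul_assoc, ιe_sq, zero_mul]
    · -- b < a
      have hne : a ≠ b := ne_of_gt hab
      have hins : (b :: t).orderedInsert (·≤·) a = b :: t.orderedInsert (·≤·) a := by
        rw [List.orderedInsert, if_neg (not_le.2 hab)]
      have hfil : ((b :: t).filter (fun c => decide (c < a))).length
          = ((t.filter (fun c => decide (c < a))).length) + 1 := by
        rw [List.filter_cons_of_pos (by simp [hab])]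
        simp
      rw [prodL_cons, ← mul_assoc, ιe_anticomm n a b, neg_mul, mul_assoc, ih hts]
      by_cases hat : a ∈ t
      · rw [if_pos hat, if_pos (List.mem_cons.2 (Or.inr hat)), mul_zero, neg_zero]
      · have hnotin : a ∉ b :: t := by
          intro hmem
          rcases List.mem_cons.1 hmem with h | h
          · exact hne h
          · exact hat h
        rw [if_neg hat, if_neg hnotin, hins, hfil, mul_smul_comm, ← neg_smul, prodL_cons,
          pow_succ]
        ring_nf

def μF (I : Finset (Fin n)) : ExteriorAlgebra ℂ (Fin n → ℂ) :=
  prodL n (I.sort (·≤·))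

lemma orderedInsert_sort (a : Fin n) (I : Finset (Fin n)) (ha : a ∉ I) :
    (I.sort (·≤·)).orderedInsert (·≤·) a = (insert a I).sort (·≤·) := by
  have hs1 : List.Pairwise (·≤·) ((I.sort (·≤·)).orderedInsert (·≤·) a) :=
    List.Pairwise.orderedInsert a _ (Finset.pairwise_sort I _)
  refine List.Perm.eq_of_pairwise' hs1 (Finset.pairwise_sort _ (·≤·)) ?_
  refine ((List.perm_orderedInsert _ a _).trans ?_)
  have h1 : List.Perm (Finset.sort I (·≤·)) I.toList := Finset.sort_perm_toList I _
  have h2 : List.Perm ((insert a I).sort (·≤·)) (insert a I).toList :=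
    Finset.sort_perm_toList _ _
  have h3 : List.Perm (insert a I).toList (a :: I.toList) := Finset.toList_insert ha
  exact ((h1.cons a).trans h3.symm).trans h2.symm

lemma ιe_mul_μF (a : Fin n) (I : Finset (Fin n)) :
    ιe n a * μF n I = if a ∈ I then 0
      else ((-1:ℂ)^(((I.sort (·≤·)).filter (fun b => decide (b < a))).length))
        • μF n (insert a I) := by
  rw [μF, mul_sorted n a _ (Finset.sortedLT_sort I).pairwise]
  by_cases ha : a ∈ I
  · rw [if_pos ((Finset.mem_sort _).2 ha), if_pos ha]
  · rw [if_neg (fun hc => ha ((Finset.mem_sort _).1 hc)), if_neg ha, μF,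
      orderedInsert_sort n a I ha]

def Wk (k : ℕ) : Submodule ℂ (ExteriorAlgebra ℂ (Fin n → ℂ)) :=
  Submodule.span ℂ (μF n '' {I : Finset (Fin n) | I.card = k})

lemma μF_mem_Wk {k : ℕ} {I : Finset (Fin n)} (h : I.card = k) : μF n I ∈ Wk n k :=
  Submodule.subset_span ⟨I, h, rfl⟩

lemma ι_mul_Wk {k : ℕ} (v : Fin n → ℂ) {x : ExteriorAlgebra ℂ (Fin n → ℂ)}
    (hx : x ∈ Wk n k) : ExteriorAlgebra.ι ℂ v * x ∈ Wk n (k+1) := by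
  have hgen : ∀ I : Finset (Fin n), I.card = k →
      ExteriorAlgebra.ι ℂ v * μF n I ∈ Wk n (k+1) := by
    intro I hI
    have hv : ExteriorAlgebra.ι ℂ v = ∑ j, v j • ιe n j := by
      conv_lhs => rw [← Finset.univ_sum_single v]
      rw [map_sum]
      refine Finset.sum_congr rfl fun j _ => ?_
      have hsingle : (Pi.single j (v j) : Fin n → ℂ)
          = v j • (Pi.single j 1 : Fin n → ℂ) := by
        rw [← Pi.single_smul, smul_eq_mul, mul_one]
      rw [hsingle, map_smul, ιe]
    rw [hv, Finset.sum_mul]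
    refine Submodule.sum_mem _ fun j _ => ?_
    rw [smul_mul_assoc]
    refine Submodule.smul_mem _ _ ?_
    rw [ιe_mul_μF]
    by_cases hj : j ∈ I
    · rw [if_pos hj]; exact Submodule.zero_mem _
    · rw [if_neg hj]
      exact Submodule.smul_mem _ _
        (μF_mem_Wk n (by rw [Finset.card_insert_of_notMem hj, hI]))
  -- propagate through the span
  have : Wk n k ≤ Submodule.comap (LinearMap.mulLeft ℂ (ExteriorAlgebra.ι ℂ v)) (Wk n (k+1)) := by
    rw [Wk, Submodule.span_le]
    rintro _ ⟨I, hI, rfl⟩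
    exact hgen I hI
  exact this hx

lemma prodL_mem (l : List (Fin n)) : prodL n l ∈ gradePart n l.length := by
  induction l with
  | nil =>
    rw [prodL_nil, gradePart, List.length_nil, pow_zero]
    exact Submodule.mem_one.2 ⟨1, map_one _⟩
  | cons a t ih =>
    rw [prodL_cons, gradePart, List.length_cons, pow_succ']
    exact Submodule.mul_mem_mul (LinearMap.mem_range_self _ _) ih

lemma gradePart_eq_Wk (k : ℕ) : gradePart n k = Wk n k := by
  apply le_antisymm
  · intro x hx
    refine Submodule.pow_induction_on_left'
      (LinearMap.range (ExteriorAlgebra.ι ℂ : (Fin n → ℂ) →ₗ[ℂ] _))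
      (C := fun i x _ => x ∈ Wk n i) ?_ ?_ ?_ hx
    · intro r
      have hμ : μF n ∅ = 1 := by rw [μF, Finset.sort_empty, prodL_nil]
      have : algebraMap ℂ (ExteriorAlgebra ℂ (Fin n → ℂ)) r = r • μF n ∅ := by
        rw [Algebra.algebraMap_eq_smul_one, hμ]
      rw [this]
      exact Submodule.smul_mem _ _ (μF_mem_Wk n (Finset.card_empty))
    · intro x y i _ _ h1 h2; exact Submodule.add_mem _ h1 h2
    · intro m hm i x _ h
      obtain ⟨u, rfl⟩ := hm
      exact ι_mul_Wk n u h
  · rw [Wk, Submodule.span_le]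
    rintro _ ⟨I, hI, rfl⟩
    have := prodL_mem n (I.sort (·≤·))
    rwa [Finset.length_sort, hI] at this

/-! ### Independence via the fermionic representation -/

def sgn (i : Fin n) (S : Finset (Fin n)) : ℂ := (-1)^((S.filter (· < i)).card)

def Cr (i : Fin n) : (Finset (Fin n) → ℂ) →ₗ[ℂ] (Finset (Fin n) → ℂ) where
  toFun f S := if i ∈ S then sgn n i (S.erase i) * f (S.erase i) else 0
  map_add' f g := by
    funext S
    by_cases h : i ∈ S <;> simp [h, mul_add]
  map_smul' c f := by
    funext S
    by_cases h : i ∈ S <;> simp [h]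
    ring

@[simp] lemma Cr_apply (i : Fin n) (f : Finset (Fin n) → ℂ) (S) :
    Cr n i f S = if i ∈ S then sgn n i (S.erase i) * f (S.erase i) else 0 := rfl

lemma sgn_erase (i j : Fin n) (S : Finset (Fin n)) (hj : j ∈ S) :
    sgn n i (S.erase j) = (if j < i then (-1:ℂ) else 1) * sgn n i S := by
  unfold sgn
  rw [Finset.filter_erase]
  by_cases h : j < i
  · have hjf : j ∈ S.filter (· < i) := Finset.mem_filter.2 ⟨hj, h⟩
    rw [Finset.card_erase_of_mem hjf, if_pos h]
    have hpos : 0 < (S.filter (· < i)).card := Finset.card_pos.2 ⟨j, hjf⟩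
    obtain ⟨m, hm⟩ : ∃ m, (S.filter (· < i)).card = m + 1 :=
      ⟨(S.filter (· < i)).card - 1, (Nat.succ_pred_eq_of_pos hpos).symm⟩
    rw [hm, Nat.add_sub_cancel, pow_succ]
    ring
  · have hjf : j ∉ S.filter (· < i) := fun hc => h (Finset.mem_filter.1 hc).2
    rw [Finset.erase_eq_of_notMem hjf, if_neg h, one_mul]

lemma Cr_Cr (i j : Fin n) (f : Finset (Fin n) → ℂ) (S : Finset (Fin n)) :
    Cr n i (Cr n j f) S + Cr n j (Cr n i f) S = 0 := by
  by_cases hij : i = j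
  · subst hij
    have h0 : Cr n i (Cr n i f) S = 0 := by
      rw [Cr_apply]
      by_cases hi : i ∈ S
      · rw [if_pos hi, Cr_apply, if_neg (Finset.notMem_erase i S), mul_zero]
      · rw [if_neg hi]
    simp [h0]
  · by_cases hi : i ∈ S
    · by_cases hj : j ∈ S
      · have hij' : i ∈ S.erase j := Finset.mem_erase.2 ⟨hij, hi⟩
        have hji' : j ∈ S.erase i := Finset.mem_erase.2 ⟨Ne.symm hij, hj⟩
        simp only [Cr_apply, if_pos hi, if_pos hj, if_pos hij', if_pos hji']
        rw [sgn_erase n j j (S.erase i) hji', sgn_erase n j i S hi,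
          sgn_erase n i i S hi, sgn_erase n i i (S.erase j) hij',
          sgn_erase n i j S hj, sgn_erase n j j S hj,
          Finset.erase_right_comm (s := S) (a := j) (b := i)]
        rcases lt_or_gt_of_ne hij with h | h
        · rw [if_pos h, if_neg (asymm h), if_neg (lt_irrefl i), if_neg (lt_irrefl j)]
          ring
        · rw [if_neg (asymm h), if_pos h, if_neg (lt_irrefl i), if_neg (lt_irrefl j)]
          ring
      · have hj' : j ∉ S.erase i := fun hc => hj (Finset.mem_of_mem_erase hc)
        simp only [Cr_apply, if_pos hi, if_neg hj, if_neg hj', mul_zero, add_zero]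
    · have hi' : i ∉ S.erase j := fun hc => hi (Finset.mem_of_mem_erase hc)
      simp only [Cr_apply, if_neg hi, if_neg hi', mul_zero, zero_add]
      split <;> rfl

def fC : (Fin n → ℂ) →ₗ[ℂ] Module.End ℂ (Finset (Fin n) → ℂ) where
  toFun v := ∑ i, v i • Cr n i
  map_add' v w := by
    simp [add_smul, Finset.sum_add_distrib]
  map_smul' c v := by
    simp [Finset.smul_sum, smul_smul]

lemma fC_sq (v : Fin n → ℂ) : fC n v * fC n v = 0 := by
  have expand : fC n v * fC n v
      = ∑ i, ∑ j, (v i * v j) • (Cr n i * Cr n j) := by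
    show (∑ i, v i • Cr n i) * (∑ j, v j • Cr n j) = _
    rw [Finset.sum_mul]
    refine Finset.sum_congr rfl fun i _ => ?_
    rw [Finset.mul_sum]
    refine Finset.sum_congr rfl fun j _ => ?_
    rw [smul_mul_assoc, mul_smul_comm, smul_smul]
  have h2 : fC n v * fC n v + fC n v * fC n v = 0 := by
    rw [expand]
    nth_rewrite 2 [Finset.sum_comm]
    rw [← Finset.sum_add_distrib]
    refine Finset.sum_eq_zero fun i _ => ?_
    rw [← Finset.sum_add_distrib]
    refine Finset.sum_eq_zero fun j _ => ?_
    have hcc : Cr n i * Cr n j + Cr n j * Cr n i = 0 := by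
      refine LinearMap.ext fun f => funext fun S => ?_
      exact Cr_Cr n i j f S
    rw [mul_comm (v j) (v i), ← smul_add, hcc, smul_zero]
  have h3 : (2:ℂ) • (fC n v * fC n v) = 0 := by rw [two_smul]; exact h2
  have h4 : ((2:ℂ)⁻¹ * 2) • (fC n v * fC n v) = 0 := by
    rw [mul_smul, h3, smul_zero]
  have h5 : ((2:ℂ)⁻¹ * 2) = 1 := by norm_num
  rw [h5, one_smul] at h4
  exact h4

def Φrep : ExteriorAlgebra ℂ (Fin n → ℂ) →ₐ[ℂ] Module.End ℂ (Finset (Fin n) → ℂ) :=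
  ExteriorAlgebra.lift ℂ ⟨fC n, fC_sq n⟩

lemma Φrep_ιe (j : Fin n) : Φrep n (ιe n j) = Cr n j := by
  rw [Φrep, ιe, ExteriorAlgebra.lift_ι_apply]
  show ∑ i, (Pi.single j (1:ℂ) : Fin n → ℂ) i • Cr n i = Cr n j
  rw [Finset.sum_eq_single j]
  · rw [Pi.single_eq_same, one_smul]
  · intro i _ hij
    rw [Pi.single_eq_of_ne hij, zero_smul]
  · intro h; exact absurd (Finset.mem_univ j) h

def δF (T : Finset (Fin n)) : Finset (Fin n) → ℂ := fun S => if S = T then 1 else 0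

lemma Cr_δF (i : Fin n) (T : Finset (Fin n)) (hi : i ∉ T) (hsgn : sgn n i T = 1) :
    Cr n i (δF n T) = δF n (insert i T) := by
  funext S
  simp only [Cr_apply, δF]
  by_cases hS : S = insert i T
  · subst hS
    rw [if_pos (Finset.mem_insert_self i T), Finset.erase_insert hi, if_pos rfl,
      hsgn, mul_one, if_pos rfl]
  · rw [if_neg hS]
    by_cases hiS : i ∈ S
    · rw [if_pos hiS]
      have hne : ¬(S.erase i = T) := by
        intro hc
        exact hS (by rw [← hc, Finset.insert_erase hiS])
      rw [if_neg hne, mul_zero]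
    · rw [if_neg hiS]

lemma Φrep_prodL (l : List (Fin n)) (hl : l.Pairwise (· < ·)) :
    Φrep n (prodL n l) (δF n ∅) = δF n l.toFinset := by
  induction l with
  | nil =>
    rw [prodL_nil, map_one]
    simp [List.toFinset_nil]
  | cons a t ih =>
    have hat := (List.pairwise_cons.1 hl).1
    have hts := (List.pairwise_cons.1 hl).2
    rw [prodL_cons, map_mul, Module.End.mul_apply, ih hts, Φrep_ιe]
    have hnotin : a ∉ t.toFinset := by
      intro hc
      exact absurd (hat a (List.mem_toFinset.1 hc)) (lt_irrefl a)
    have hsgn : sgn n a t.toFinset = 1 := by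
      unfold sgn
      have : t.toFinset.filter (· < a) = ∅ := by
        refine Finset.filter_eq_empty_iff.2 fun {b} hb => ?_
        exact not_lt.2 (le_of_lt (hat b (List.mem_toFinset.1 hb)))
      rw [this, Finset.card_empty, pow_zero]
    rw [Cr_δF n a t.toFinset hnotin hsgn, List.toFinset_cons]

def evT (T : Finset (Fin n)) : ExteriorAlgebra ℂ (Fin n → ℂ) →ₗ[ℂ] ℂ where
  toFun x := Φrep n x (δF n ∅) T
  map_add' x y := by simp
  map_smul' c x := by simp

lemma evT_μF (T I : Finset (Fin n)) : evT n T (μF n I) = if T = I then 1 else 0 := by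
  have : Φrep n (μF n I) (δF n ∅) = δF n I := by
    rw [μF, Φrep_prodL n _ (Finset.sortedLT_sort I).pairwise, Finset.sort_toFinset]
  show Φrep n (μF n I) (δF n ∅) T = _
  rw [this, δF]

lemma μF_indep (k : ℕ) :
    LinearIndependent ℂ (fun I : {I : Finset (Fin n) // I.card = k} => μF n ↑I) := by
  rw [Fintype.linearIndependent_iff]
  intro g hg I₀
  have h1 := congrArg (evT n ↑I₀) hg
  rw [map_sum, map_zero] at h1
  have h2 : ∑ I : {I : Finset (Fin n) // I.card = k},
      g I * (if (↑I₀ : Finset (Fin n)) = ↑I then 1 else 0) = 0 := by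
    refine Eq.trans ?_ h1
    refine Finset.sum_congr rfl fun I _ => ?_
    rw [map_smul, evT_μF, smul_eq_mul]
  rw [Finset.sum_eq_single I₀] at h2
  · rwa [if_pos rfl, mul_one] at h2
  · intro I _ hne
    rw [if_neg, mul_zero]
    intro hc
    exact hne (Subtype.ext hc.symm)
  · intro h; exact absurd (Finset.mem_univ I₀) h

lemma gradePart_finrank (k : ℕ) :
    Module.finrank ℂ (gradePart n k) = n.choose k := by
  have himg : μF n '' {I : Finset (Fin n) | I.card = k}
      = Set.range (fun I : {I : Finset (Fin n) // I.card = k} => μF n ↑I) := by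
    ext x
    constructor
    · rintro ⟨I, hI, rfl⟩
      exact ⟨⟨I, hI⟩, rfl⟩
    · rintro ⟨⟨I, hI⟩, rfl⟩
      exact ⟨I, hI, rfl⟩
  have : gradePart n k
      = Submodule.span ℂ (Set.range (fun I : {I : Finset (Fin n) // I.card = k} => μF n ↑I)) := by
    rw [gradePart_eq_Wk, Wk, himg]
  rw [this, finrank_span_eq_card (μF_indep n k)]
  rw [Fintype.card_subtype]
  have : Finset.filter (fun I : Finset (Fin n) => I.card = k) Finset.univ
      = Finset.powersetCard k Finset.univ := by
    rw [Finset.powersetCard_eq_filter, Finset.powerset_univ]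
  rw [this, Finset.card_powersetCard, Finset.card_univ, Fintype.card_fin]

/-! ### Assembly -/

lemma const_eq_fun (v : ExteriorAlgebra ℂ (Fin n → ℂ)) :
    constL n v = (fun _ => v : FormSpace n) := rfl

lemma const_mem_Zk {k : ℕ} {v : ExteriorAlgebra ℂ (Fin n → ℂ)} (h : v ∈ gradePart n k) :
    constL n v ∈ Zk n k := by
  refine ⟨const_mem n h, ?_⟩
  exact dL_const n v

lemma main_exact {k : ℕ} {ω : FormSpace n} (hω : ω ∈ Zk n k) :
    avgL n ω ∈ gradePart n k ∧ ω - constL n (avgL n ω) ∈ Bk n k := by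
  obtain ⟨hmem, hker⟩ := hω
  have hker' : dL n ω = 0 := hker
  refine ⟨avg_mem n hmem, ?_⟩
  -- the homotopy identity applied to ω
  have hhom := LinearMap.congr_fun (homotopy n n) ω
  have hPp : Pp n n ω = constL n (avgL n ω) := funext fun x => Pp_top n ω x
  have key : ω - constL n (avgL n ω) = dL n (Hh n n ω) := by
    have : dL n (Hh n n ω) + Hh n n (dL n ω) = ω - Pp n n ω := hhom
    rw [hker', map_zero, add_zero] at this
    rw [this, hPp]
  by_cases hk : k = 0
  · subst hk
    have hzero : Hh n n ω = 0 := Hh_zero n n hmem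
    rw [Bk, if_pos rfl]
    rw [key, hzero, map_zero]
    exact Submodule.zero_mem _
  · rw [Bk, if_neg hk]
    rw [key]
    exact Submodule.mem_map_of_mem (Hh_mem n n hmem)

lemma const_inj {k : ℕ} {v : ExteriorAlgebra ℂ (Fin n → ℂ)}
    (hB : constL n v ∈ Bk n k) : v = 0 := by
  by_cases hk : k = 0
  · subst hk
    rw [Bk, if_pos rfl, Submodule.mem_bot] at hB
    have := congrFun hB 0
    simpa using this
  · rw [Bk, if_neg hk] at hB
    obtain ⟨η, _, hη⟩ := hB
    have h1 : avgL n (constL n v) = v := avg_const n v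
    have h2 : avgL n (dL n η) = 0 := avg_dL n η
    rw [← h1, ← hη, h2]

noncomputable def cohomMap (k : ℕ) :
    gradePart n k →ₗ[ℂ] (↥(Zk n k) ⧸ Submodule.comap (Zk n k).subtype (Bk n k)) :=
  (Submodule.comap (Zk n k).subtype (Bk n k)).mkQ ∘ₗ
    (LinearMap.codRestrict (Zk n k) ((constL n) ∘ₗ (gradePart n k).subtype)
      (fun v => const_mem_Zk n v.2))

lemma cohomMap_bijective (k : ℕ) : Function.Bijective (cohomMap n k) := by
  constructor
  · rw [← LinearMap.ker_eq_bot, LinearMap.ker_eq_bot']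
    intro v hv
    have : constL n (↑v) ∈ Bk n k := by
      have h0 := hv
      rw [cohomMap, LinearMap.comp_apply, Submodule.mkQ_apply,
        Submodule.Quotient.mk_eq_zero, Submodule.mem_comap] at h0
      exact h0
    exact Subtype.ext (const_inj n this)
  · intro q
    obtain ⟨z, rfl⟩ := Submodule.mkQ_surjective _ q
    obtain ⟨ω, hω⟩ := z
    obtain ⟨hgrade, hexact⟩ := main_exact n hω
    refine ⟨⟨avgL n ω, hgrade⟩, ?_⟩
    rw [cohomMap, LinearMap.comp_apply, Submodule.mkQ_apply, Submodule.mkQ_apply,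
      Submodule.Quotient.eq]
    rw [Submodule.mem_comap]
    have : ((LinearMap.codRestrict (Zk n k) ((constL n) ∘ₗ (gradePart n k).subtype)
        (fun v => const_mem_Zk n v.2)) ⟨avgL n ω, hgrade⟩ - ⟨ω, hω⟩ : ↥(Zk n k))
        = (⟨constL n (avgL n ω) - ω, Submodule.sub_mem _ (const_mem_Zk n hgrade) hω⟩ :
            ↥(Zk n k)) := rfl
    rw [this]
    show constL n (avgL n ω) - ω ∈ Bk n k
    have := Submodule.neg_mem _ hexact
    simpa using this

end
end NC12

/-- The `k`-th noncommutative de Rham cohomology of `(ℤ₂)ⁿ`, for `0 ≤ k ≤ n`,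
has dimension `binomial(n,k)` and is represented by the constant
`Λᵏ(ℂⁿ)`-valued forms. -/
theorem stmt_12 (n k : ℕ) (hn : 1 ≤ n) (hk : k ≤ n) :
    Module.finrank ℂ (↥(Zk n k) ⧸ Submodule.comap (Zk n k).subtype (Bk n k))
        = n.choose k
    ∧ ∀ ω ∈ Zk n k, ∃ v ∈ gradePart n k, ω - (fun _ => v) ∈ Bk n k := by
  constructor
  · have e := LinearEquiv.ofBijective (NC12.cohomMap n k) (NC12.cohomMap_bijective n k)
    rw [← e.finrank_eq, NC12.gradePart_finrank n k]
  · intro ω hω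
    obtain ⟨hgrade, hexact⟩ := NC12.main_exact n hω
    exact ⟨NC12.avgL n ω, hgrade, by rw [← NC12.const_eq_fun]; exact hexact⟩
end

section
/- Let n ≥ 1 and let Q be the quadratic form Q(x) = Σ_{i=1}^n x_i² on ℂⁿ, with Clifford algebra Cliff(n) = CliffordAlgebra(Q) and generators γ_a = ι(e_a), so that γ_a γ_b + γ_b γ_a = 2δ_{ab}. For k ∈ (ℤ/2ℤ)ⁿ with integer representatives k_a ∈ {0,1}, set γ_k = γ₁^{k₁}·γ₂^{k₂}⋯γ_n^{k_n}. Then {γ_k : k ∈ (ℤ/2ℤ)ⁿ} is a ℂ-basis of Cliff(n), and for all k, m ∈ (ℤ/2ℤ)ⁿ one has γ_k·γ_m = (−1)^{Σ_{j<i} k_i m_j}·γ_{k+m}, where k + m is componentwise addition in (ℤ/2ℤ)ⁿ. -/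
open Finset

/-- The quadratic form `Q(x) = Σ_{i=1}^n x_i²` on `ℂⁿ`. -/
noncomputable def Qn (n : ℕ) : QuadraticForm ℂ (Fin n → ℂ) :=
  QuadraticMap.weightedSumSquares ℂ (fun _ : Fin n => (1 : ℂ))

/-- The generators `γ_a = ι(e_a)` of the Clifford algebra `Cliff(n)`. -/
noncomputable def gam (n : ℕ) (a : Fin n) : CliffordAlgebra (Qn n) :=
  CliffordAlgebra.ι (Qn n) (Pi.single a 1)

/-- The ordered monomials `γ_k = γ₁^{k₁}γ₂^{k₂}⋯γ_n^{k_n}` for `k ∈ (ℤ₂)ⁿ`. -/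
noncomputable def gamK (n : ℕ) (k : Fin n → ZMod 2) : CliffordAlgebra (Qn n) :=
  ((List.finRange n).map (fun a => gam n a ^ (k a).val)).prod

lemma zmod2_cases (x : ZMod 2) : x = 0 ∨ x = 1 := by revert x; decide

lemma Qn_single (n : ℕ) (a : Fin n) : Qn n (Pi.single a 1) = 1 := by
  simp [Qn, QuadraticMap.weightedSumSquares_apply, Pi.single_apply,
    Finset.sum_ite_eq' Finset.univ a]

lemma gam_sq (n : ℕ) (a : Fin n) : gam n a * gam n a = 1 := by
  rw [gam, CliffordAlgebra.ι_sq_scalar, Qn_single, map_one]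

lemma gam_anti {n : ℕ} {a b : Fin n} (h : a ≠ b) :
    gam n a * gam n b + gam n b * gam n a = 0 := by
  rw [gam, gam, CliffordAlgebra.ι_mul_ι_add_swap]
  have hp : QuadraticMap.polar (Qn n) (Pi.single a 1) (Pi.single b 1) = 0 := by
    set v : Fin n → ℂ := Pi.single a 1 with hv
    set w : Fin n → ℂ := Pi.single b 1 with hw
    have hterm : ∀ i : Fin n, (v + w) i * (v + w) i = v i * v i + w i * w i := by
      intro i
      have hz : v i * w i = 0 := by
        rcases eq_or_ne i a with rfl|ha
        · have : w i = 0 := by simp [hw, Pi.single_apply, Ne.symm h]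
          rw [this, mul_zero]
        · have : v i = 0 := by simp [hv, Pi.single_apply, ha]
          rw [this, zero_mul]
      have : (v + w) i * (v + w) i = v i * v i + w i * w i + 2 * (v i * w i) := by
        simp only [Pi.add_apply]; ring
      rw [this, hz]; ring
    simp only [QuadraticMap.polar, Qn, QuadraticMap.weightedSumSquares_apply, one_smul]
    rw [Finset.sum_congr rfl (fun i _ => hterm i), Finset.sum_add_distrib]
    ring
  rw [hp, map_zero]

lemma gam_anticomm {n : ℕ} {a b : Fin n} (h : a ≠ b) :
    gam n a * gam n b = -(gam n b * gam n a) :=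
  eq_neg_of_add_eq_zero_left (gam_anti h)

lemma sorted_split {α : Type*} [LinearOrder α] :
    ∀ (l : List α), l.Pairwise (· < ·) → ∀ a ∈ l,
      l = l.filter (fun b => b < a) ++ a :: l.filter (fun b => a < b)
  | [], _, a, ha => by simp at ha
  | x :: t, hp, a, ha => by
    rcases List.pairwise_cons.1 hp with ⟨hx, ht⟩
    rcases List.mem_cons.1 ha with rfl|hat
    · have h1 : (a :: t).filter (fun b => b < a) = [] := by
        rw [List.filter_eq_nil_iff]
        intro b hb
        rcases List.mem_cons.1 hb with rfl|hbt
        · simp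
        · simp [not_lt.2 (le_of_lt (hx b hbt))]
      have h2 : (a :: t).filter (fun b => a < b) = t := by
        rw [List.filter_cons, if_neg (by simp)]
        exact List.filter_eq_self.2 (fun b hb => by simp [hx b hb])
      rw [h1, h2]; simp
    · have hxa : x < a := hx a hat
      have h1 : (x :: t).filter (fun b => b < a) = x :: t.filter (fun b => b < a) := by
        rw [List.filter_cons, if_pos (by simp [hxa])]
      have h2 : (x :: t).filter (fun b => a < b) = t.filter (fun b => a < b) := by
        rw [List.filter_cons, if_neg (by simp [not_lt.2 (le_of_lt hxa)])]
      rw [h1, h2, List.cons_append]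
      congr 1
      exact sorted_split t ht a hat

lemma finRange_split (n : ℕ) (a : Fin n) :
    List.finRange n = (List.finRange n).filter (fun b => b < a)
      ++ a :: (List.finRange n).filter (fun b => a < b) :=
  sorted_split _ (List.pairwise_lt_finRange n) a (List.mem_finRange a)

lemma sum_filter_list {α : Type*} (f : α → ℕ) (p : α → Prop) [DecidablePred p] :
    ∀ l : List α, ((l.filter (fun b => p b)).map f).sum = (l.map (fun b => if p b then f b else 0)).sum
  | [] => by simp
  | x :: t => by
    rw [List.filter_cons]
    by_cases hx : p x <;> simp [hx, sum_filter_list f p t]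

lemma sum_filter_univ {n : ℕ} (f : Fin n → ℕ) (p : Fin n → Prop) [DecidablePred p] :
    ∑ j ∈ Finset.univ.filter p, f j = (((List.finRange n).filter (fun b => p b)).map f).sum := by
  rw [sum_filter_list, Finset.sum_filter, Fin.sum_univ_def]

lemma gamK_split (n : ℕ) (k : Fin n → ZMod 2) (a : Fin n) :
    gamK n k =
      (((List.finRange n).filter (fun b => b < a)).map (fun b => gam n b ^ (k b).val)).prod
      * gam n a ^ (k a).val
      * (((List.finRange n).filter (fun b => a < b)).map (fun b => gam n b ^ (k b).val)).prod := by
  rw [gamK]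
  conv_lhs => rw [finRange_split n a]
  rw [List.map_append, List.prod_append, List.map_cons, List.prod_cons, mul_assoc]

lemma prod_congr_of_eqOn {n : ℕ} (k m : Fin n → ZMod 2) (l : List (Fin n))
    (h : ∀ b ∈ l, k b = m b) :
    (l.map (fun b => gam n b ^ (k b).val)).prod = (l.map (fun b => gam n b ^ (m b).val)).prod := by
  congr 1
  exact List.map_congr_left (fun b hb => by rw [h b hb])

lemma gamK_zero (n : ℕ) : gamK n 0 = 1 := by
  rw [gamK]
  apply List.prod_eq_one
  intro x hx
  rcases List.mem_map.1 hx with ⟨a, _, rfl⟩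
  simp

lemma gamK_single (n : ℕ) (a : Fin n) : gamK n (Pi.single a 1) = gam n a := by
  set kk : Fin n → ZMod 2 := Pi.single a 1 with hkk
  rw [gamK_split n kk a]
  have h1 : ∀ b : Fin n, b ≠ a → (kk b).val = 0 := by
    intro b hb; rw [hkk, Pi.single_eq_of_ne hb]; rfl
  have hb1 : (((List.finRange n).filter (fun b => b < a)).map
      (fun b => gam n b ^ (kk b).val)).prod = 1 := by
    apply List.prod_eq_one
    intro x hx
    rcases List.mem_map.1 hx with ⟨b, hbmem, rfl⟩
    rw [h1 b (ne_of_lt (by simpa using (List.mem_filter.1 hbmem).2)), pow_zero]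
  have hb2 : (((List.finRange n).filter (fun b => a < b)).map
      (fun b => gam n b ^ (kk b).val)).prod = 1 := by
    apply List.prod_eq_one
    intro x hx
    rcases List.mem_map.1 hx with ⟨b, hbmem, rfl⟩
    rw [h1 b (ne_of_gt (by simpa using (List.mem_filter.1 hbmem).2)), pow_zero]
  have ha : (kk a).val = 1 := by rw [hkk, Pi.single_eq_same]; rfl
  rw [hb1, hb2, ha, one_mul, mul_one, pow_one]

-- move a generator past a power
lemma gam_move_pow {n : ℕ} {a b : Fin n} (h : b ≠ a) (e : ℕ) :
    gam n a * gam n b ^ e = ((-1 : ℂ) ^ e) • (gam n b ^ e * gam n a) := by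
  induction e with
  | zero => simp
  | succ e ih =>
    have hsgn : ((-1 : ℂ)) ^ (e + 1) = -(-1 : ℂ) ^ e := by ring
    rw [pow_succ, ← mul_assoc, ih, smul_mul_assoc, mul_assoc,
      gam_anticomm (show a ≠ b from Ne.symm h), hsgn, neg_smul, mul_neg, smul_neg,
      mul_assoc]

-- move a generator past a product over a list avoiding a
lemma gam_move_list {n : ℕ} (a : Fin n) (k : Fin n → ZMod 2) :
    ∀ l : List (Fin n), (∀ b ∈ l, b ≠ a) →
      gam n a * (l.map (fun b => gam n b ^ (k b).val)).prod
        = ((-1 : ℂ) ^ ((l.map (fun b => (k b).val)).sum))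
            • ((l.map (fun b => gam n b ^ (k b).val)).prod * gam n a)
  | [], _ => by simp
  | x :: t, hl => by
    have hx : x ≠ a := hl x List.mem_cons_self
    have ht := gam_move_list a k t (fun b hb => hl b (List.mem_cons_of_mem x hb))
    rw [List.map_cons, List.prod_cons, ← mul_assoc, gam_move_pow hx, smul_mul_assoc,
      mul_assoc, ht, mul_smul_comm, smul_smul, ← pow_add, List.map_cons, List.sum_cons,
      ← mul_assoc]


lemma gam_mul_gamK {n : ℕ} (a : Fin n) (m : Fin n → ZMod 2) :
    gam n a * gamK n m
      = ((-1 : ℂ) ^ (∑ j ∈ Finset.univ.filter (fun j => j < a), (m j).val))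
          • gamK n (Pi.single a 1 + m) := by
  set m' : Fin n → ZMod 2 := Pi.single a 1 + m with hm'
  have hoff : ∀ b : Fin n, b ≠ a → m' b = m b := by
    intro b hb; rw [hm']; simp [Pi.single_eq_of_ne hb]
  set L1 := (List.finRange n).filter (fun b => b < a) with hL1
  set L2 := (List.finRange n).filter (fun b => a < b) with hL2
  have hmem1 : ∀ b ∈ L1, b ≠ a := by
    intro b hb
    exact ne_of_lt (by simpa [hL1] using (List.mem_filter.1 hb).2)
  have hmem2 : ∀ b ∈ L2, b ≠ a := by
    intro b hb
    exact ne_of_gt (by simpa [hL2] using (List.mem_filter.1 hb).2)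
  have hP1 : (L1.map (fun b => gam n b ^ (m' b).val)).prod
      = (L1.map (fun b => gam n b ^ (m b).val)).prod :=
    prod_congr_of_eqOn _ _ _ (fun b hb => hoff b (hmem1 b hb))
  have hP2 : (L2.map (fun b => gam n b ^ (m' b).val)).prod
      = (L2.map (fun b => gam n b ^ (m b).val)).prod :=
    prod_congr_of_eqOn _ _ _ (fun b hb => hoff b (hmem2 b hb))
  have hmid : gam n a * gam n a ^ (m a).val = gam n a ^ (m' a).val := by
    have hma' : m' a = 1 + m a := by rw [hm']; simp
    rcases zmod2_cases (m a) with h|h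
    · rw [h] at hma'
      rw [h, hma']
      have h1 : ((1 : ZMod 2) + 0).val = 1 := rfl
      have h0 : (0 : ZMod 2).val = 0 := rfl
      rw [h1, h0, pow_zero, pow_one, mul_one]
    · rw [h] at hma'
      rw [h, hma']
      have : ((1 : ZMod 2) + 1) = 0 := by decide
      rw [this]
      show gam n a * gam n a ^ (1 : ZMod 2).val = gam n a ^ (0 : ZMod 2).val
      have h1 : (1 : ZMod 2).val = 1 := rfl
      have h0 : (0 : ZMod 2).val = 0 := rfl
      rw [h1, h0, pow_one, pow_zero, gam_sq]
  have hsum : ∑ j ∈ Finset.univ.filter (fun j => j < a), (m j).val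
      = (L1.map (fun b => (m b).val)).sum := sum_filter_univ _ _
  rw [gamK_split n m a, gamK_split n m' a, hP1, hP2, hsum]
  rw [← mul_assoc, ← mul_assoc, gam_move_list a m L1 hmem1, smul_mul_assoc, smul_mul_assoc,
    mul_assoc (L1.map (fun b => gam n b ^ (m b).val)).prod, hmid]

lemma val_one' {n : ℕ} {k : Fin n → ZMod 2} {a : Fin n} (h : k a ≠ 0) : (k a).val = 1 := by
  rcases zmod2_cases (k a) with h0|h1
  · exact absurd h0 h
  · rw [h1]; rfl

lemma prod_one_of_zero {n : ℕ} (k : Fin n → ZMod 2) (l : List (Fin n))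
    (h : ∀ b ∈ l, k b = 0) : (l.map (fun b => gam n b ^ (k b).val)).prod = 1 := by
  apply List.prod_eq_one
  intro x hx
  rcases List.mem_map.1 hx with ⟨b, hb, rfl⟩
  rw [h b hb]
  norm_num

lemma gamK_peel_max {n : ℕ} {k : Fin n → ZMod 2} {a : Fin n}
    (ha : k a ≠ 0) (hmax : ∀ b, a < b → k b = 0) :
    gamK n k = gamK n (Function.update k a 0) * gam n a := by
  set k' := Function.update k a 0 with hk'
  rw [gamK_split n k a, gamK_split n k' a]
  have hup2 : (((List.finRange n).filter (fun b => a < b)).map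
      (fun b => gam n b ^ (k b).val)).prod = 1 := by
    apply prod_one_of_zero
    intro b hb
    exact hmax b (by simpa using (List.mem_filter.1 hb).2)
  have hup2' : (((List.finRange n).filter (fun b => a < b)).map
      (fun b => gam n b ^ (k' b).val)).prod = 1 := by
    apply prod_one_of_zero
    intro b hb
    have hba : a < b := by simpa using (List.mem_filter.1 hb).2
    rw [hk', Function.update_of_ne (ne_of_gt hba)]
    exact hmax b hba
  have hlow : (((List.finRange n).filter (fun b => b < a)).map
      (fun b => gam n b ^ (k' b).val)).prod
      = (((List.finRange n).filter (fun b => b < a)).map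
      (fun b => gam n b ^ (k b).val)).prod := by
    apply prod_congr_of_eqOn
    intro b hb
    rw [hk', Function.update_of_ne (ne_of_lt (by simpa using (List.mem_filter.1 hb).2))]
  have hmida : (k' a).val = 0 := by rw [hk', Function.update_self]; rfl
  rw [hup2, hup2', hlow, hmida, val_one' ha, pow_zero, pow_one, mul_one, mul_one, mul_one]

lemma gamK_peel_min {n : ℕ} {k : Fin n → ZMod 2} {a : Fin n}
    (ha : k a ≠ 0) (hmin : ∀ b, b < a → k b = 0) :
    gamK n k = gam n a * gamK n (Function.update k a 0) := by
  set k' := Function.update k a 0 with hk'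
  rw [gamK_split n k a, gamK_split n k' a]
  have hup2' : (((List.finRange n).filter (fun b => a < b)).map
      (fun b => gam n b ^ (k' b).val)).prod
      = (((List.finRange n).filter (fun b => a < b)).map
      (fun b => gam n b ^ (k b).val)).prod := by
    apply prod_congr_of_eqOn
    intro b hb
    rw [hk', Function.update_of_ne (ne_of_gt (by simpa using (List.mem_filter.1 hb).2))]
  have hlow : (((List.finRange n).filter (fun b => b < a)).map
      (fun b => gam n b ^ (k b).val)).prod = 1 := by
    apply prod_one_of_zero
    intro b hb
    exact hmin b (by simpa using (List.mem_filter.1 hb).2)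
  have hlow' : (((List.finRange n).filter (fun b => b < a)).map
      (fun b => gam n b ^ (k' b).val)).prod = 1 := by
    apply prod_one_of_zero
    intro b hb
    have hba : b < a := by simpa using (List.mem_filter.1 hb).2
    rw [hk', Function.update_of_ne (ne_of_lt hba)]
    exact hmin b hba
  have hmida : (k' a).val = 0 := by rw [hk', Function.update_self]; rfl
  rw [hup2', hlow, hlow', hmida, val_one' ha, pow_zero, pow_one, one_mul, one_mul, one_mul]

noncomputable def sgn (n : ℕ) (k m : Fin n → ZMod 2) : ℕ :=
  ∑ i, ∑ j ∈ Finset.univ.filter (fun j => j < i), (k i).val * (m j).val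

lemma key_mul {n : ℕ} : ∀ (c : ℕ) (k m : Fin n → ZMod 2),
    (Finset.univ.filter (fun i => k i ≠ 0)).card = c →
    gamK n k * gamK n m = ((-1 : ℂ) ^ sgn n k m) • gamK n (k + m) := by
  intro c
  induction c using Nat.strong_induction_on with
  | _ c ih =>
    intro k m hc
    by_cases hk0 : ∀ i, k i = 0
    · have hk : k = 0 := funext hk0
      subst hk
      have hs : sgn n 0 m = 0 := by
        simp [sgn]
      rw [hs, gamK_zero, one_mul, zero_add, pow_zero, one_smul]
    · push_neg at hk0
      set s := Finset.univ.filter (fun i => k i ≠ 0) with hs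
      have hsne : s.Nonempty := by
        obtain ⟨i, hi⟩ := hk0
        exact ⟨i, by simp [hs, hi]⟩
      set a := s.max' hsne with hadef
      have hka : k a ≠ 0 := by
        have h := s.max'_mem hsne
        exact (Finset.mem_filter.1 h).2
      have hka1 : k a = 1 := by
        rcases zmod2_cases (k a) with h|h
        · exact absurd h hka
        · exact h
      have hmax : ∀ b, a < b → k b = 0 := by
        intro b hb
        by_contra hbn
        have hbs : b ∈ s := by simp [hs, hbn]
        exact absurd (s.le_max' b hbs) (not_le.2 hb)
      set k' := Function.update k a 0 with hk'
      have hk'a : k' a = 0 := by rw [hk']; exact Function.update_self a 0 k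
      have hk'ne : ∀ i, i ≠ a → k' i = k i := by
        intro i hi; rw [hk']; exact Function.update_of_ne hi 0 k
      have hs' : Finset.univ.filter (fun i => k' i ≠ 0) = s.erase a := by
        ext i
        rcases eq_or_ne i a with rfl|hia
        · simp [hk'a]
        · simp [hk'ne i hia, hs, hia]
      have hcard : (Finset.univ.filter (fun i => k' i ≠ 0)).card < c := by
        rw [hs', Finset.card_erase_of_mem (s.max'_mem hsne)]
        have h1 : s.card = c := hc
        have h2 : 0 < s.card := Finset.card_pos.2 hsne
        omega
      have hlow : ∀ i, i < a → k' i = k i := fun i hi => hk'ne i (ne_of_lt hi)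
      have hi_lt : ∀ i, k' i ≠ 0 → i < a := by
        intro i hi
        have : i ∈ s.erase a := by rw [← hs']; simpa using hi
        exact lt_of_le_of_ne (s.le_max' i (Finset.mem_of_mem_erase this))
          (Finset.ne_of_mem_erase this)
      set m' : Fin n → ZMod 2 := Pi.single a 1 + m with hm'
      have hm'off : ∀ j, j ≠ a → m' j = m j := by
        intro j hj; rw [hm']; simp [Pi.single_eq_of_ne hj]
      -- sign identities
      have hsgn1 : sgn n k' m' = sgn n k' m := by
        apply Finset.sum_congr rfl
        intro i _
        by_cases hki : k' i = 0
        · simp [hki]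
        · apply Finset.sum_congr rfl
          intro j hj
          have hji : j < i := by simpa using hj
          have hja : j ≠ a := ne_of_lt (lt_trans hji (hi_lt i hki))
          rw [hm'off j hja]
      have hsgn2 : sgn n k m = sgn n k' m + ∑ j ∈ Finset.univ.filter (fun j => j < a), (m j).val := by
        have hinner : ∀ i, i ≠ a →
            (∑ j ∈ Finset.univ.filter (fun j => j < i), (k i).val * (m j).val)
            = ∑ j ∈ Finset.univ.filter (fun j => j < i), (k' i).val * (m j).val := by
          intro i hi
          rw [hk'ne i hi]
        have ha1 : (∑ j ∈ Finset.univ.filter (fun j => j < a), (k a).val * (m j).val)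
            = ∑ j ∈ Finset.univ.filter (fun j => j < a), (m j).val := by
          apply Finset.sum_congr rfl
          intro j _
          rw [hka1]
          show (1 : ZMod 2).val * (m j).val = (m j).val
          rw [show (1 : ZMod 2).val = 1 from rfl, one_mul]
        have ha2 : (∑ j ∈ Finset.univ.filter (fun j => j < a), (k' a).val * (m j).val) = 0 := by
          rw [hk'a]
          simp
        rw [sgn, sgn, ← Finset.sum_erase_add _ _ (Finset.mem_univ a),
          ← Finset.sum_erase_add _ _ (Finset.mem_univ a), ha1, ha2, add_zero]
        congr 1
        apply Finset.sum_congr rfl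
        intro i hi
        exact hinner i (Finset.ne_of_mem_erase hi)
      -- vector identity
      have hvec : k' + m' = k + m := by
        funext i
        rcases eq_or_ne i a with rfl|hia
        · rw [hm']
          simp [hk'a, hka1]
        · show k' i + m' i = k i + m i
          rw [hm'off i hia, hk'ne i hia]
      -- main computation
      rw [gamK_peel_max hka hmax, ← hk', mul_assoc, gam_mul_gamK, ← hm', mul_smul_comm,
        ih _ hcard k' m' rfl, hsgn1, hvec, smul_smul, ← pow_add]
      congr 2
      rw [hsgn2]
      ring

/-- sign factor -/
noncomputable def eps (n : ℕ) (a : Fin n) (k : Fin n → ZMod 2) : ℂ :=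
  (-1 : ℂ) ^ (∑ j ∈ Finset.univ.filter (fun j => j < a), (k j).val)

lemma single_add_single {n : ℕ} (a : Fin n) :
    (Pi.single a 1 : Fin n → ZMod 2) + Pi.single a 1 = 0 := by
  funext i
  rcases eq_or_ne i a with rfl|h
  · simp only [Pi.add_apply, Pi.single_eq_same, Pi.zero_apply]
    decide
  · simp [Pi.single_eq_of_ne h]

lemma eps_add_of_not_lt {n : ℕ} {a b : Fin n} (h : ¬ b < a) (k : Fin n → ZMod 2) :
    eps n a (k + Pi.single b 1) = eps n a k := by
  unfold eps
  congr 1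
  apply Finset.sum_congr rfl
  intro j hj
  have hja : j < a := by simpa using hj
  have hjb : j ≠ b := fun hh => h (hh ▸ hja)
  rw [Pi.add_apply, Pi.single_eq_of_ne hjb, add_zero]

lemma eps_add_of_lt {n : ℕ} {a b : Fin n} (h : b < a) (k : Fin n → ZMod 2) :
    eps n a (k + Pi.single b 1) = -eps n a k := by
  unfold eps
  have hb : b ∈ Finset.univ.filter (fun j => j < a) := by simp [h]
  rw [← Finset.sum_erase_add _ _ hb, ← Finset.sum_erase_add _ _ hb]
  have hsame : ∑ j ∈ (Finset.univ.filter (fun j => j < a)).erase b,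
      ((k + Pi.single b 1 : Fin n → ZMod 2) j).val
      = ∑ j ∈ (Finset.univ.filter (fun j => j < a)).erase b, (k j).val := by
    apply Finset.sum_congr rfl
    intro j hj
    rw [Pi.add_apply, Pi.single_eq_of_ne (Finset.ne_of_mem_erase hj), add_zero]
  rw [hsame, pow_add, pow_add]
  have hflip : (-1 : ℂ) ^ ((k + Pi.single b 1 : Fin n → ZMod 2) b).val
      = -(-1 : ℂ) ^ (k b).val := by
    rw [Pi.add_apply, Pi.single_eq_same]
    have hv1 : (1 : ZMod 2).val = 1 := rfl
    rcases zmod2_cases (k b) with h0|h1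
    · rw [h0, zero_add, hv1]
      norm_num
    · rw [h1, show ((1 : ZMod 2) + 1) = 0 by decide, hv1]
      norm_num
  rw [hflip]
  ring

/-- the creation/annihilation operators -/
noncomputable def cop (n : ℕ) (a : Fin n) :
    Module.End ℂ ((Fin n → ZMod 2) → ℂ) where
  toFun f := fun k => eps n a k * f (k + Pi.single a 1)
  map_add' f g := by funext k; simp [mul_add]
  map_smul' r f := by
    funext k
    simp only [Pi.smul_apply, smul_eq_mul, RingHom.id_apply]
    ring

lemma cop_sq (n : ℕ) (a : Fin n) : cop n a * cop n a = 1 := by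
  apply LinearMap.ext
  intro f
  funext k
  show eps n a k * (eps n a (k + Pi.single a 1) * f (k + Pi.single a 1 + Pi.single a 1)) = f k
  rw [eps_add_of_not_lt (lt_irrefl a) k, add_assoc, single_add_single, add_zero,
    ← mul_assoc, eps, ← pow_add]
  rw [Even.neg_one_pow (Even.add_self _), one_mul]

lemma cop_anti {n : ℕ} {a b : Fin n} (h : a ≠ b) :
    cop n a * cop n b + cop n b * cop n a = 0 := by
  have main : ∀ (a b : Fin n), b < a → cop n a * cop n b + cop n b * cop n a = 0 := by
    intro a b hba
    apply LinearMap.ext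
    intro f
    funext k
    show eps n a k * (eps n b (k + Pi.single a 1) * f (k + Pi.single a 1 + Pi.single b 1))
        + eps n b k * (eps n a (k + Pi.single b 1) * f (k + Pi.single b 1 + Pi.single a 1))
        = 0
    have harg : k + Pi.single a 1 + Pi.single b 1 = k + Pi.single b 1 + Pi.single a 1 := by
      rw [add_assoc, add_assoc, add_comm (Pi.single a 1)]
    rw [harg, eps_add_of_not_lt (not_lt.2 (le_of_lt hba)) k, eps_add_of_lt hba k]
    ring
  rcases lt_or_gt_of_ne h with hab|hba
  · rw [add_comm]
    exact main b a hab
  · exact main a b hba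

lemma cop_rel (n : ℕ) (a b : Fin n) :
    cop n a * cop n b + cop n b * cop n a
      = if a = b then (2 : Module.End ℂ ((Fin n → ZMod 2) → ℂ)) else 0 := by
  rcases eq_or_ne a b with rfl|h
  · rw [if_pos rfl, cop_sq]; norm_num [two_smul]
  · rw [if_neg h, cop_anti h]

noncomputable def cmap (n : ℕ) : (Fin n → ℂ) →ₗ[ℂ] Module.End ℂ ((Fin n → ZMod 2) → ℂ) :=
  Fintype.linearCombination ℂ (cop n)

lemma cmap_sq (n : ℕ) (v : Fin n → ℂ) :
    cmap n v * cmap n v = algebraMap ℂ _ (Qn n v) := by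
  have happ : cmap n v = ∑ a, v a • cop n a := Fintype.linearCombination_apply ℂ (cop n) v
  have hQ : Qn n v = ∑ a, v a * v a := by
    simp [Qn, QuadraticMap.weightedSumSquares_apply]
  have lhs2 : cmap n v * cmap n v + cmap n v * cmap n v
      = ∑ a, ∑ b, (v a * v b) • (cop n a * cop n b + cop n b * cop n a) := by
    have h1 : ∀ a b : Fin n, (v a • cop n a) * (v b • cop n b)
        = (v a * v b) • (cop n a * cop n b) := fun a b => smul_mul_smul_comm (v a) _ (v b) _
    have e1 : ∑ a, ∑ b, (v a • cop n a) * (v b • cop n b)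
        = ∑ a, ∑ b, (v a * v b) • (cop n a * cop n b) :=
      Finset.sum_congr rfl (fun a _ => Finset.sum_congr rfl (fun b _ => h1 a b))
    have swap' : ∑ a, ∑ b, (v a * v b) • (cop n a * cop n b)
        = ∑ a, ∑ b, (v a * v b) • (cop n b * cop n a) := by
      rw [Finset.sum_comm]
      apply Finset.sum_congr rfl; intro a _
      apply Finset.sum_congr rfl; intro b _
      rw [mul_comm (v b)]
    rw [happ, Finset.sum_mul_sum, e1]
    nth_rewrite 2 [swap']
    rw [← Finset.sum_add_distrib]
    apply Finset.sum_congr rfl; intro a _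
    rw [← Finset.sum_add_distrib]
    apply Finset.sum_congr rfl; intro b _
    rw [smul_add]
  have rel : ∑ a, ∑ b, (v a * v b) • (cop n a * cop n b + cop n b * cop n a)
      = algebraMap ℂ _ (Qn n v) + algebraMap ℂ _ (Qn n v) := by
    have hin : ∀ a : Fin n, ∑ b, (v a * v b) • (cop n a * cop n b + cop n b * cop n a)
        = (v a * v a) • (2 : Module.End ℂ ((Fin n → ZMod 2) → ℂ)) := by
      intro a
      rw [Finset.sum_congr rfl (fun b _ => by rw [cop_rel n a b])]
      rw [Finset.sum_eq_single a (fun b _ hb => by rw [if_neg (Ne.symm hb), smul_zero])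
        (fun h => absurd (Finset.mem_univ a) h), if_pos rfl]
    have htwo : ∀ a : Fin n, (v a * v a) • (2 : Module.End ℂ ((Fin n → ZMod 2) → ℂ))
        = algebraMap ℂ _ (v a * v a) + algebraMap ℂ _ (v a * v a) := by
      intro a
      rw [Algebra.algebraMap_eq_smul_one, ← smul_add, one_add_one_eq_two]
    rw [Finset.sum_congr rfl (fun a _ => (hin a).trans (htwo a)), Finset.sum_add_distrib, hQ,
      map_sum]
  have h2 : cmap n v * cmap n v + cmap n v * cmap n v
      = algebraMap ℂ _ (Qn n v) + algebraMap ℂ _ (Qn n v) := lhs2.trans rel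
  have := congrArg (fun x => (2⁻¹ : ℂ) • x) h2
  simpa [← two_smul ℂ, smul_smul] using this

noncomputable def rep (n : ℕ) :
    CliffordAlgebra (Qn n) →ₐ[ℂ] Module.End ℂ ((Fin n → ZMod 2) → ℂ) :=
  CliffordAlgebra.lift (Qn n) ⟨cmap n, cmap_sq n⟩

lemma rep_gam (n : ℕ) (a : Fin n) : rep n (gam n a) = cop n a := by
  rw [rep, gam, CliffordAlgebra.lift_ι_apply, cmap,
    Fintype.linearCombination_apply_single, one_smul]

lemma cop_delta {n : ℕ} (a : Fin n) (m : Fin n → ZMod 2) :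
    cop n a (Pi.single m 1)
      = ((-1 : ℂ) ^ (∑ j ∈ Finset.univ.filter (fun j => j < a), (m j).val))
          • (Pi.single (m + Pi.single a 1) 1 : (Fin n → ZMod 2) → ℂ) := by
  funext kk
  simp only [cop, LinearMap.coe_mk, AddHom.coe_mk, Pi.smul_apply, smul_eq_mul]
  rcases eq_or_ne kk (m + Pi.single a 1) with rfl|hk
  · have harg : m + Pi.single a 1 + Pi.single a 1 = m := by
      rw [add_assoc, single_add_single, add_zero]
    rw [harg, Pi.single_eq_same, Pi.single_eq_same, mul_one, mul_one,
      eps_add_of_not_lt (lt_irrefl a) m]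
    rfl
  · have harg : kk + Pi.single a 1 ≠ m := by
      intro hh
      apply hk
      rw [← hh, add_assoc, single_add_single, add_zero]
    rw [Pi.single_eq_of_ne harg, Pi.single_eq_of_ne hk, mul_zero, mul_zero]

lemma rep_gamK_delta {n : ℕ} : ∀ (c : ℕ) (k : Fin n → ZMod 2),
    (Finset.univ.filter (fun i => k i ≠ 0)).card = c →
    rep n (gamK n k) (Pi.single 0 1) = Pi.single k 1 := by
  intro c
  induction c using Nat.strong_induction_on with
  | _ c ih =>
    intro k hc
    by_cases hk0 : ∀ i, k i = 0
    · have hk : k = 0 := funext hk0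
      subst hk
      rw [gamK_zero, map_one]
      rfl
    · push_neg at hk0
      set s := Finset.univ.filter (fun i => k i ≠ 0) with hs
      have hsne : s.Nonempty := by
        obtain ⟨i, hi⟩ := hk0
        exact ⟨i, by simp [hs, hi]⟩
      set a := s.min' hsne with hadef
      have hka : k a ≠ 0 := (Finset.mem_filter.1 (s.min'_mem hsne)).2
      have hka1 : k a = 1 := by
        rcases zmod2_cases (k a) with h|h
        · exact absurd h hka
        · exact h
      have hmin : ∀ b, b < a → k b = 0 := by
        intro b hb
        by_contra hbn
        have hbs : b ∈ s := by simp [hs, hbn]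
        exact absurd (s.min'_le b hbs) (not_le.2 hb)
      set k' := Function.update k a 0 with hk'
      have hk'a : k' a = 0 := Function.update_self a 0 k
      have hk'ne : ∀ i, i ≠ a → k' i = k i := fun i hi => Function.update_of_ne hi 0 k
      have hs' : Finset.univ.filter (fun i => k' i ≠ 0) = s.erase a := by
        ext i
        rcases eq_or_ne i a with rfl|hia
        · simp [hk'a]
        · simp [hk'ne i hia, hs, hia]
      have hcard : (Finset.univ.filter (fun i => k' i ≠ 0)).card < c := by
        rw [hs', Finset.card_erase_of_mem (s.min'_mem hsne)]
        have h1 : s.card = c := hc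
        have h2 : 0 < s.card := Finset.card_pos.2 hsne
        omega
      have hpeel : gamK n k = gam n a * gamK n k' := gamK_peel_min hka hmin
      rw [hpeel, map_mul]
      show (rep n (gam n a)) ((rep n (gamK n k')) (Pi.single 0 1)) = _
      rw [ih _ hcard k' rfl, rep_gam, cop_delta]
      have hzero : ∑ j ∈ Finset.univ.filter (fun j => j < a), (k' j).val = 0 := by
        apply Finset.sum_eq_zero
        intro j hj
        have hja : j < a := by simpa using hj
        rw [hk'ne j (ne_of_lt hja), hmin j hja]
        rfl
      have hvec : k' + Pi.single a 1 = k := by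
        funext i
        rcases eq_or_ne i a with h|hia
        · subst h
          rw [Pi.add_apply, Pi.single_eq_same, hk'a, zero_add, hka1]
        · rw [Pi.add_apply, Pi.single_eq_of_ne hia, hk'ne i hia, add_zero]
      rw [hzero, pow_zero, one_smul, hvec]

lemma gamK_span (n : ℕ) : Submodule.span ℂ (Set.range (gamK n)) = ⊤ := by
  rw [eq_top_iff]
  have main : ∀ x : CliffordAlgebra (Qn n), x ∈ Submodule.span ℂ (Set.range (gamK n)) := by
    intro x
    induction x using CliffordAlgebra.induction with
    | algebraMap r =>
      rw [Algebra.algebraMap_eq_smul_one, ← gamK_zero n]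
      exact Submodule.smul_mem _ r (Submodule.subset_span ⟨0, rfl⟩)
    | ι v =>
      have hv : CliffordAlgebra.ι (Qn n) v = ∑ a, v a • gam n a := by
        have hvdec : v = ∑ a, Pi.single a (v a) := (Finset.univ_sum_single v).symm
        conv_lhs => rw [hvdec]
        rw [map_sum]
        apply Finset.sum_congr rfl
        intro a _
        have hsingle : (Pi.single a (v a) : Fin n → ℂ) = v a • (Pi.single a 1 : Fin n → ℂ) := by
          rw [← Pi.single_smul, smul_eq_mul, mul_one]
        rw [hsingle, map_smul, gam]
      rw [hv]
      apply Submodule.sum_mem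
      intro a _
      exact Submodule.smul_mem _ _ (Submodule.subset_span ⟨Pi.single a 1, gamK_single n a⟩)
    | mul x y hx hy =>
      have hle : Submodule.span ℂ (Set.range (gamK n)) * Submodule.span ℂ (Set.range (gamK n))
          ≤ Submodule.span ℂ (Set.range (gamK n)) := by
        rw [Submodule.span_mul_span]
        rw [Submodule.span_le]
        rintro z hz
        rw [Set.mem_mul] at hz
        obtain ⟨x', hx', y', hy', rfl⟩ := hz
        obtain ⟨k, rfl⟩ := hx'
        obtain ⟨m, rfl⟩ := hy'
        rw [SetLike.mem_coe, key_mul _ k m rfl]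
        exact Submodule.smul_mem _ _ (Submodule.subset_span ⟨k + m, rfl⟩)
      exact hle (Submodule.mul_mem_mul hx hy)
    | add x y hx hy => exact Submodule.add_mem _ hx hy
  exact fun x _ => main x

lemma gamK_indep (n : ℕ) : LinearIndependent ℂ (gamK n) := by
  let T : CliffordAlgebra (Qn n) →ₗ[ℂ] ((Fin n → ZMod 2) → ℂ) :=
    { toFun := fun x => rep n x (Pi.single 0 1)
      map_add' := fun x y => by simp only [map_add, LinearMap.add_apply]
      map_smul' := fun r x => by simp only [map_smul, LinearMap.smul_apply, RingHom.id_apply] }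
  apply LinearIndependent.of_comp T
  have hcomp : (T ∘ gamK n) = fun k : Fin n → ZMod 2 => (Pi.single k 1 : (Fin n → ZMod 2) → ℂ) :=
    funext (fun k => rep_gamK_delta _ k rfl)
  rw [hcomp]
  have hbe : (fun k : Fin n → ZMod 2 => (Pi.single k 1 : (Fin n → ZMod 2) → ℂ))
      = ⇑(Pi.basisFun ℂ (Fin n → ZMod 2)) := by
    funext k
    rw [Pi.basisFun_apply]
  rw [hbe]
  exact (Pi.basisFun ℂ (Fin n → ZMod 2)).linearIndependent


/-- `Cliff(n)` as a cocycle twist of the group algebra of `(ℤ₂)ⁿ`: the generators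
satisfy `γ_aγ_b + γ_bγ_a = 2δ_{ab}`, the `γ_k` form a ℂ-basis, and
`γ_k γ_m = (−1)^{Σ_{j<i} k_i m_j} γ_{k+m}`. -/
theorem stmt_17 (n : ℕ) (hn : 1 ≤ n) :
    (∀ a b : Fin n, gam n a * gam n b + gam n b * gam n a
        = if a = b then 2 else 0)
    ∧ LinearIndependent ℂ (gamK n)
    ∧ Submodule.span ℂ (Set.range (gamK n)) = ⊤
    ∧ (∀ k m : Fin n → ZMod 2,
        gamK n k * gamK n m
          = ((-1 : ℂ) ^ (∑ i, ∑ j ∈ Finset.univ.filter (fun j => j < i),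
              (k i).val * (m j).val)) • gamK n (k + m)) := by
  refine ⟨?_, gamK_indep n, gamK_span n, ?_⟩
  · intro a b
    rcases eq_or_ne a b with rfl|h
    · rw [if_pos rfl, gam_sq, one_add_one_eq_two]
    · rw [if_neg h, gam_anti h]
  · intro k m
    exact key_mul _ k m rfl
end
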